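/- arXiv:1010.2902 — 6 statements merged into one kernel-verified Lean document; each statement's English description precedes it below -/
import Mathlib

section
/- For each n ≥ 1, the Tutte polynomial of the Schreier graph Γ_n of the Grigorchuk group is T_n(x, y) = y^{2^n + 4} · x^{2^{n−1}} · (y + x)^{2^{n−1} − 1}. -/
/-- A finite multigraph on a vertex set `V`: a finite edge type together with an
incidence map assigning to each edge its unordered pair of endpoints
(loops and parallel edges are allowed). -/
structure Multigraph (V : Type) where
  /-- the type of edges -/
  Edge : Type
  /-- the edge type is finite -/
  fintypeEdge : Fintype Edge
  /-- equality of edges is decidable -/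
  decEqEdge : DecidableEq Edge
  /-- the unordered pair of endpoints of an edge -/
  inc : Edge → Sym2 V

attribute [instance] Multigraph.fintypeEdge Multigraph.decEqEdge

namespace Multigraph

variable {V : Type} [Fintype V] [DecidableEq V]

/-- The simple graph underlying the spanning subgraph of `G` with edge set `A`:
two distinct vertices are adjacent iff some edge in `A` has them as endpoints. -/
def toSimple (G : Multigraph V) (A : Finset G.Edge) : SimpleGraph V :=
  SimpleGraph.fromRel fun u v => ∃ e ∈ A, G.inc e = s(u, v)

/-- `G.comps A` is the number `k(A)` of connected components of the spanning
subgraph of `G` with edge set `A`. -/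
noncomputable def comps (G : Multigraph V) (A : Finset G.Edge) : ℕ :=
  Nat.card (G.toSimple A).ConnectedComponent

/-- The rank `r(A) = |V| - k(A)` of the spanning subgraph with edge set `A`. -/
noncomputable def rk (G : Multigraph V) (A : Finset G.Edge) : ℕ :=
  Fintype.card V - G.comps A

/-- The nullity `n(A) = |E(A)| - r(A)` of the spanning subgraph with edge set `A`. -/
noncomputable def nullity (G : Multigraph V) (A : Finset G.Edge) : ℕ :=
  A.card - G.rk A

/-- The Tutte polynomial
`T(G; x, y) = ∑_{A ⊆ E} (x - 1) ^ (r(E) - r(A)) * (y - 1) ^ n(A)`,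
as a function of two real variables. -/
noncomputable def tutte (G : Multigraph V) (x y : ℝ) : ℝ :=
  ∑ A ∈ (Finset.univ : Finset G.Edge).powerset,
    (x - 1) ^ (G.rk Finset.univ - G.rk A) * (y - 1) ^ (G.nullity A)

/-- The reliability polynomial `R(G, p)`: the probability that, when each edge is
independently active with probability `p`, every pair of vertices is joined by a
path of active edges (i.e. the spanning subgraph of active edges is connected). -/
noncomputable def reliability (G : Multigraph V) (p : ℝ) : ℝ :=
  ∑ A ∈ (Finset.univ : Finset G.Edge).powerset,
    if G.comps A = 1 then p ^ A.card * (1 - p) ^ (Fintype.card G.Edge - A.card) else 0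

/-- The complexity `τ(G)`: the number of spanning subtrees of `G`, i.e. spanning
subgraphs which are connected and have `|V| - 1` edges. -/
noncomputable def treeCount (G : Multigraph V) : ℕ :=
  Nat.card {A : Finset G.Edge // G.comps A = 1 ∧ A.card + 1 = Fintype.card V}

/-- The number of connected spanning subgraphs of `G`. -/
noncomputable def connCount (G : Multigraph V) : ℕ :=
  Nat.card {A : Finset G.Edge // G.comps A = 1}

/-- The number of spanning forests of `G`: spanning subgraphs containing no cycle,
i.e. with `|E(A)| = |V| - k(A)` (zero nullity). -/
noncomputable def forestCount (G : Multigraph V) : ℕ :=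
  Nat.card {A : Finset G.Edge // A.card + G.comps A = Fintype.card V}

/-- `σ` is an orientation of `G` if it assigns to every edge an ordered pair of
vertices whose underlying unordered pair is the pair of endpoints of the edge. -/
def IsOrientation (G : Multigraph V) (σ : G.Edge → V × V) : Prop :=
  ∀ e, s((σ e).1, (σ e).2) = G.inc e

/-- The number of acyclic orientations of `G`: orientations admitting no directed
cycle. -/
noncomputable def acyclicOrientationCount (G : Multigraph V) : ℕ :=
  Nat.card {σ : G.Edge → V × V //
    G.IsOrientation σ ∧ ∀ v : V, ¬ Relation.TransGen (fun u w => ∃ e, σ e = (u, w)) v v}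

/-- A proper coloring of `G`: the two endpoints of every edge receive distinct
colors. -/
def ProperColoring (G : Multigraph V) {α : Type} (c : V → α) : Prop :=
  ∀ e, ¬ (Sym2.map c (G.inc e)).IsDiag

/-- The number of proper colorings of `G` with `k` colors (the value `χ(G, k)` of
the chromatic polynomial at the natural number `k`). -/
noncomputable def chromCount (G : Multigraph V) (k : ℕ) : ℕ :=
  Nat.card {c : V → Fin k // G.ProperColoring c}

end Multigraph

/-- The left endpoint of the `i`-th gap of a path on `2^n` vertices. -/
def leftV (n : ℕ) (i : Fin (2 ^ n - 1)) : Fin (2 ^ n) :=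
  ⟨i.val, by have := i.isLt; omega⟩

/-- The right endpoint of the `i`-th gap of a path on `2^n` vertices. -/
def rightV (n : ℕ) (i : Fin (2 ^ n - 1)) : Fin (2 ^ n) :=
  ⟨i.val + 1, by have := i.isLt; omega⟩

/-- The vertex carrying the `j`-th extra loop: the two outermost vertices carry
two extra loops each. -/
def endV (n : ℕ) (j : Fin 4) : Fin (2 ^ n) :=
  if j.val < 2 then ⟨0, by positivity⟩
  else
    ⟨2 ^ n - 1, by
      have h : 0 < 2 ^ n := by positivity
      omega⟩

/-- The level-`n` Schreier graph `Γ_n` of the Grigorchuk group, as an unlabelled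
multigraph: the path-shaped cactus on `2^n` vertices obtained by alternating
`2^(n-1)` bridges (single edges, at even gaps) and `2^(n-1) - 1` cycles of length
two (double edges, at odd gaps), with one loop at every vertex and two extra loops
at each of the two outermost vertices (which therefore carry three loops each). -/
def grig (n : ℕ) : Multigraph (Fin (2 ^ n)) where
  Edge := (Σ i : Fin (2 ^ n - 1), Fin (if Even i.val then 1 else 2)) ⊕ (Fin (2 ^ n) ⊕ Fin 4)
  fintypeEdge := inferInstance
  decEqEdge := inferInstance
  inc := fun e =>
    match e with
    | Sum.inl ⟨i, _⟩ => s(leftV n i, rightV n i)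
    | Sum.inr (Sum.inl v) => s(v, v)
    | Sum.inr (Sum.inr j) => s(endV n j, endV n j)


section PathComponents

private def fcnt (p : ℕ → Prop) [DecidablePred p] (v : ℕ) : ℕ :=
  ((Finset.range v).filter fun k => ¬ p k).card

private lemma fcnt_zero (p : ℕ → Prop) [DecidablePred p] : fcnt p 0 = 0 := by
  simp [fcnt]

private lemma fcnt_succ (p : ℕ → Prop) [DecidablePred p] (v : ℕ) :
    fcnt p (v + 1) = fcnt p v + (if p v then 0 else 1) := by
  unfold fcnt
  rw [Finset.range_add_one, Finset.filter_insert]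
  by_cases h : p v
  · simp [h]
  · rw [if_pos h, Finset.card_insert_of_notMem (by simp), if_neg h]

private lemma fcnt_mono (p : ℕ → Prop) [DecidablePred p] : Monotone (fcnt p) :=
  fun _ _ h => Finset.card_le_card (Finset.filter_subset_filter _ (Finset.range_subset_range.2 h))

private lemma path_card_components {N : ℕ} (hN : 1 ≤ N) (G : SimpleGraph (Fin N))
    (p : ℕ → Prop) [DecidablePred p]
    (hadj : ∀ u v : Fin N, G.Adj u v ↔
      (u.val + 1 = v.val ∧ p u.val) ∨ (v.val + 1 = u.val ∧ p v.val)) :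
    Nat.card G.ConnectedComponent = N - ((Finset.range (N - 1)).filter p).card := by
  set f := fcnt p with hf
  have hmono : Monotone f := fcnt_mono p
  have hstep : ∀ v, f (v + 1) = f v + (if p v then 0 else 1) := fcnt_succ p
  have hAdj : ∀ u v : Fin N, G.Adj u v → f u.val = f v.val := by
    intro u v h
    rcases (hadj u v).1 h with ⟨h1, h2⟩ | ⟨h1, h2⟩
    · have e := hstep u.val; rw [if_pos h2] at e; rw [← h1]; omega
    · have e := hstep v.val; rw [if_pos h2] at e; rw [← h1]; omega
  have hReach1 : ∀ u v : Fin N, G.Reachable u v → f u.val = f v.val := by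
    intro u v h
    obtain ⟨w⟩ := h
    induction w with
    | nil => rfl
    | cons h _ ih => exact (hAdj _ _ h).trans ih
  have hReach2 : ∀ d : ℕ, ∀ u v : Fin N, u.val ≤ v.val → v.val - u.val ≤ d →
      f u.val = f v.val → G.Reachable u v := by
    intro d
    induction d with
    | zero =>
      intro u v h1 h2 _
      have : u = v := Fin.ext (by omega)
      exact this ▸ SimpleGraph.Reachable.refl u
    | succ d ih =>
      intro u v h1 h2 h3
      by_cases he : u.val = v.val
      · have : u = v := Fin.ext he
        exact this ▸ SimpleGraph.Reachable.refl u
      · have hlt : u.val < v.val := by omega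
        have hu1 : u.val + 1 < N := by have := v.isLt; omega
        set u' : Fin N := ⟨u.val + 1, hu1⟩ with hu'
        have h4 : f (u.val + 1) = f u.val := by
          have l1 : f u.val ≤ f (u.val + 1) := hmono (by omega)
          have l2 : f (u.val + 1) ≤ f v.val := hmono (by omega)
          omega
        have hp : p u.val := by
          by_contra hp
          have := hstep u.val
          rw [if_neg hp] at this
          omega
        have hadj1 : G.Adj u u' := (hadj u u').2 (Or.inl ⟨rfl, hp⟩)
        exact hadj1.reachable.trans
          (ih u' v (by simp [hu']; omega) (by simp [hu']; omega) (by simpa [hu', h4] using h3))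
  set U := f (N - 1) with hU
  have hle : ∀ v : Fin N, f v.val ≤ U := fun v => hmono (by have := v.isLt; omega)
  have hIVT : ∀ m k : ℕ, k ≤ f m → ∃ v, v ≤ m ∧ f v = k := by
    intro m
    induction m with
    | zero =>
      intro k hk
      have : f 0 = 0 := fcnt_zero p
      exact ⟨0, le_refl _, by omega⟩
    | succ m ih =>
      intro k hk
      by_cases h : k ≤ f m
      · obtain ⟨v, hv, hfv⟩ := ih k h
        exact ⟨v, by omega, hfv⟩
      · have h2 := hstep m
        refine ⟨m + 1, le_refl _, ?_⟩
        by_cases hp : p m <;> simp [hp] at h2 <;> omega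
  let φ : G.ConnectedComponent → Fin (U + 1) :=
    SimpleGraph.ConnectedComponent.lift (fun v => ⟨f v.val, Nat.lt_succ_of_le (hle v)⟩)
      (fun v w q _ => Fin.ext (hReach1 v w q.reachable))
  have hφbij : Function.Bijective φ := by
    constructor
    · intro a b
      obtain ⟨u, rfl⟩ := a.exists_rep
      obtain ⟨v, rfl⟩ := b.exists_rep
      intro h
      have hfe : f u.val = f v.val := by
        exact congrArg Fin.val h
      rcases le_total u.val v.val with hle' | hle'
      · exact SimpleGraph.ConnectedComponent.sound (hReach2 N u v hle' (by omega) hfe)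
      · exact (SimpleGraph.ConnectedComponent.sound
          (hReach2 N v u hle' (by omega) hfe.symm)).symm
    · intro k
      obtain ⟨v, hv, hfv⟩ := hIVT (N - 1) k.val (by omega)
      exact ⟨G.connectedComponentMk ⟨v, by omega⟩, Fin.ext (by simpa [φ] using hfv)⟩
  rw [Nat.card_eq_of_bijective φ hφbij, Nat.card_eq_fintype_card, Fintype.card_fin]
  have h1 : ((Finset.range (N - 1)).filter p).card +
      ((Finset.range (N - 1)).filter (fun x => ¬ p x)).card = N - 1 := by
    rw [Finset.card_filter_add_card_filter_not, Finset.card_range]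
  have h2 : ((Finset.range (N - 1)).filter p).card ≤ N - 1 := by omega
  have h3 : U = ((Finset.range (N - 1)).filter (fun x => ¬ p x)).card := rfl
  omega

end PathComponents

section Grig

instance grigEqDec (n : ℕ) (e : (grig n).Edge)
    (x : (Σ i : Fin (2 ^ n - 1), Fin (if Even i.val then 1 else 2)) ⊕ (Fin (2 ^ n) ⊕ Fin 4)) :
    Decidable (e = x) :=
  instDecidableEqSum _ _

instance grigMemDec (n : ℕ) (A : Finset (grig n).Edge)
    (x : (Σ i : Fin (2 ^ n - 1), Fin (if Even i.val then 1 else 2)) ⊕ (Fin (2 ^ n) ⊕ Fin 4)) :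
    Decidable (x ∈ A) :=
  Finset.decidableMem (α := (grig n).Edge) x A

/-- gap `k` is occupied by some edge of `A` -/
def gapP (n : ℕ) (A : Finset (grig n).Edge) (k : ℕ) : Prop :=
  ∃ e ∈ A, ∃ (i : Fin (2 ^ n - 1)) (j : Fin (if Even i.val then 1 else 2)),
    e = Sum.inl ⟨i, j⟩ ∧ i.val = k

instance gapP_dec (n : ℕ) (A : Finset (grig n).Edge) : DecidablePred (gapP n A) :=
  fun k => by unfold gapP; exact inferInstance

def gcard (n : ℕ) (A : Finset (grig n).Edge) : ℕ :=
  ((Finset.range (2 ^ n - 1)).filter (gapP n A)).card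

lemma adj_grig (n : ℕ) (A : Finset (grig n).Edge) (u v : Fin (2 ^ n)) :
    ((grig n).toSimple A).Adj u v ↔
      (u.val + 1 = v.val ∧ gapP n A u.val) ∨ (v.val + 1 = u.val ∧ gapP n A v.val) := by
  rw [Multigraph.toSimple, SimpleGraph.fromRel_adj]
  have key : ∀ u v : Fin (2 ^ n), u ≠ v → (∃ e ∈ A, (grig n).inc e = s(u, v)) →
      ((u.val + 1 = v.val ∧ gapP n A u.val) ∨ (v.val + 1 = u.val ∧ gapP n A v.val)) := by
    rintro u v hne ⟨e, heA, hinc⟩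
    rcases e with ⟨i, j⟩ | (w | j4)
    · simp only [grig] at hinc
      rcases Sym2.eq_iff.1 hinc with ⟨h1, h2⟩ | ⟨h1, h2⟩
      · refine Or.inl ⟨?_, _, heA, i, j, rfl, by rw [← h1]; rfl⟩
        rw [← h1, ← h2]; simp [leftV, rightV]
      · refine Or.inr ⟨?_, _, heA, i, j, rfl, by rw [← h1]; rfl⟩
        rw [← h1, ← h2]; simp [leftV, rightV]
    · simp only [grig] at hinc
      rcases Sym2.eq_iff.1 hinc with ⟨h1, h2⟩ | ⟨h1, h2⟩ <;>
        first
          | exact absurd (h1.symm.trans h2) hne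
          | exact absurd (h2.symm.trans h1) hne
    · simp only [grig] at hinc
      rcases Sym2.eq_iff.1 hinc with ⟨h1, h2⟩ | ⟨h1, h2⟩ <;>
        first
          | exact absurd (h1.symm.trans h2) hne
          | exact absurd (h2.symm.trans h1) hne
  constructor
  · rintro ⟨hne, h | h⟩
    · exact key u v hne h
    · exact Or.symm (key v u hne.symm h)
  · rintro (⟨h1, e, heA, i, j, rfl, hik⟩ | ⟨h1, e, heA, i, j, rfl, hik⟩)
    · have hne : u ≠ v := fun h => by rw [h] at h1; omega
      refine ⟨hne, Or.inl ⟨_, heA, ?_⟩⟩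
      simp only [grig]
      exact Sym2.eq_iff.2 (Or.inl ⟨Fin.ext (by simpa [leftV] using hik),
        Fin.ext (by simp [rightV]; omega)⟩)
    · have hne : u ≠ v := fun h => by rw [h] at h1; omega
      refine ⟨hne, Or.inl ⟨_, heA, ?_⟩⟩
      simp only [grig]
      exact Sym2.eq_iff.2 (Or.inr ⟨Fin.ext (by simpa [leftV] using hik),
        Fin.ext (by simp [rightV]; omega)⟩)

lemma comps_grig (n : ℕ) (A : Finset (grig n).Edge) :
    (grig n).comps A = 2 ^ n - gcard n A := by
  have h := path_card_components (N := 2 ^ n) (Nat.one_le_two_pow) ((grig n).toSimple A)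
    (gapP n A) (adj_grig n A)
  rw [Multigraph.comps, h, gcard]

lemma gcard_le (n : ℕ) (A : Finset (grig n).Edge) : gcard n A ≤ 2 ^ n - 1 := by
  rw [gcard]
  exact le_trans (Finset.card_filter_le _ _) (by rw [Finset.card_range])

lemma rk_grig (n : ℕ) (A : Finset (grig n).Edge) : (grig n).rk A = gcard n A := by
  rw [Multigraph.rk, comps_grig, Fintype.card_fin]
  have h1 := gcard_le n A
  have h2 : 1 ≤ 2 ^ n := Nat.one_le_two_pow
  omega

lemma gcard_univ (n : ℕ) : gcard n Finset.univ = 2 ^ n - 1 := by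
  rw [gcard]
  rw [Finset.filter_true_of_mem, Finset.card_range]
  intro k hk
  rw [Finset.mem_range] at hk
  refine ⟨Sum.inl ⟨⟨k, hk⟩, ⟨0, ?_⟩⟩, Finset.mem_univ _, ⟨k, hk⟩, ⟨0, ?_⟩, rfl, rfl⟩ <;>
    · split <;> omega

end Grig

section Helpers

lemma card_filter_fin_eq_range (m : ℕ) (q : ℕ → Prop) [DecidablePred q] :
    ((Finset.univ : Finset (Fin m)).filter fun i => q i.val).card
      = ((Finset.range m).filter q).card := by
  refine Finset.card_bij' (fun i _ => i.val)
    (fun k hk => ⟨k, Finset.mem_range.1 (Finset.mem_filter.1 hk).1⟩) ?_ ?_ ?_ ?_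
  · intro a ha
    simp only [Finset.mem_filter, Finset.mem_univ, true_and] at ha
    simp [Finset.mem_filter, Finset.mem_range, a.isLt, ha]
  · intro k hk
    simp only [Finset.mem_filter, Finset.mem_univ, true_and]
    exact (Finset.mem_filter.1 hk).2
  · intro a _
    rfl
  · intro k _
    rfl

lemma card_range_even (m : ℕ) :
    ((Finset.range m).filter (fun k => Even k)).card = (m + 1) / 2 := by
  induction m with
  | zero => simp
  | succ m ih =>
    rw [Finset.range_add_one, Finset.filter_insert]
    by_cases h : Even m
    · rw [if_pos h, Finset.card_insert_of_notMem (by simp), ih]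
      obtain ⟨t, rfl⟩ := h
      omega
    · rw [if_neg h, ih]
      obtain ⟨t, rfl⟩ := Nat.not_even_iff_odd.1 h
      omega

/-- the per-gap weight -/
noncomputable def gfun (x y : ℝ) (m : ℕ) (s : Finset (Fin m)) : ℝ :=
  (x - 1) ^ (1 - (if s.Nonempty then 1 else 0)) *
    (y - 1) ^ (s.card - if s.Nonempty then 1 else 0)

lemma sum_gap_one (x y : ℝ) : ∑ s : Finset (Fin 1), gfun x y 1 s = x := by
  rw [show (Finset.univ : Finset (Finset (Fin 1))) = {∅, {0}} from by decide]
  rw [Finset.sum_insert (by decide), Finset.sum_singleton]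
  have h1 : ¬ (∅ : Finset (Fin 1)).Nonempty := by simp
  have h2 : ({0} : Finset (Fin 1)).Nonempty := ⟨0, by decide⟩
  simp [gfun, h1, h2]
  try ring

lemma sum_gap_two (x y : ℝ) : ∑ s : Finset (Fin 2), gfun x y 2 s = x + y := by
  rw [show (Finset.univ : Finset (Finset (Fin 2))) = {∅, {0}, {1}, {0, 1}} from by decide]
  rw [Finset.sum_insert (by decide), Finset.sum_insert (by decide),
    Finset.sum_insert (by decide), Finset.sum_singleton]
  have h1 : ¬ (∅ : Finset (Fin 2)).Nonempty := by simp
  have h2 : ({0} : Finset (Fin 2)).Nonempty := ⟨0, by decide⟩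
  have h3 : ({1} : Finset (Fin 2)).Nonempty := ⟨1, by decide⟩
  have h4 : ({0, 1} : Finset (Fin 2)).Nonempty := ⟨0, by decide⟩
  have h5 : ({0, 1} : Finset (Fin 2)).card = 2 := by decide
  simp [gfun, h1, h2, h3, h4, h5]
  try ring

lemma gap_sum (m : ℕ) (hm : m = 1 ∨ m = 2) (x y : ℝ) :
    ∑ s : Finset (Fin m), gfun x y m s = if m = 1 then x else x + y := by
  rcases hm with rfl | rfl
  · simpa using sum_gap_one x y
  · simpa using sum_gap_two x y

lemma loop_sum (y : ℝ) (β : Type) [Fintype β] [DecidableEq β] :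
    ∑ L : Finset β, (y - 1) ^ L.card = y ^ (Fintype.card β) := by
  have h := Finset.sum_pow_mul_eq_add_pow (y - 1) 1 (Finset.univ : Finset β)
  simp only [one_pow, mul_one, Finset.powerset_univ, Finset.card_univ] at h
  rw [show y ^ (Fintype.card β) = (y - 1 + 1) ^ (Fintype.card β) by ring]
  exact h

end Helpers

section Param

variable (n : ℕ)

abbrev κt (i : Fin (2 ^ n - 1)) : Type := Fin (if Even i.val then 1 else 2)

abbrev Loopt : Type := Fin (2 ^ n) ⊕ Fin 4

abbrev Pt : Type := (∀ i : Fin (2 ^ n - 1), Finset (κt n i)) × Finset (Loopt n)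

def Fmap (SL : Pt n) : Finset (grig n).Edge :=
  (Finset.univ.sigma SL.1).disjSum SL.2

lemma mem_Fmap_inl (SL : Pt n) (i : Fin (2 ^ n - 1)) (j : κt n i) :
    (Sum.inl ⟨i, j⟩ : (grig n).Edge) ∈ Fmap n SL ↔ j ∈ SL.1 i := by
  unfold Fmap
  show ((Sum.inl ⟨i, j⟩ : (Σ i : Fin (2 ^ n - 1), κt n i) ⊕ Loopt n)
        ∈ (Finset.univ.sigma SL.1).disjSum SL.2) ↔ _
  rw [Finset.inl_mem_disjSum, Finset.mem_sigma]
  simp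

lemma mem_Fmap_inr (SL : Pt n) (l : Loopt n) :
    (Sum.inr l : (grig n).Edge) ∈ Fmap n SL ↔ l ∈ SL.2 := by
  unfold Fmap
  show ((Sum.inr l : (Σ i : Fin (2 ^ n - 1), κt n i) ⊕ Loopt n)
        ∈ (Finset.univ.sigma SL.1).disjSum SL.2) ↔ _
  rw [Finset.inr_mem_disjSum]

lemma Fmap_bijective : Function.Bijective (Fmap n) := by
  constructor
  · rintro ⟨S, L⟩ ⟨S', L'⟩ h
    simp only [Prod.mk.injEq]
    constructor
    · funext i
      ext j
      rw [← mem_Fmap_inl n ⟨S, L⟩ i j, ← mem_Fmap_inl n ⟨S', L'⟩ i j, h]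
    · ext l
      rw [← mem_Fmap_inr n ⟨S, L⟩ l, ← mem_Fmap_inr n ⟨S', L'⟩ l, h]
  · intro A
    refine ⟨⟨fun i => Finset.univ.filter (fun j => Sum.inl ⟨i, j⟩ ∈ A),
      Finset.univ.filter (fun l => Sum.inr l ∈ A)⟩, ?_⟩
    ext e
    rcases e with ⟨i, j⟩ | l
    · exact (mem_Fmap_inl n _ i j).trans (by simp; exact Iff.rfl)
    · exact (mem_Fmap_inr n _ l).trans (by simp; exact Iff.rfl)

lemma gcard_Fmap (SL : Pt n) :
    gcard n (Fmap n SL) =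
      (Finset.univ.filter fun i : Fin (2 ^ n - 1) => (SL.1 i).Nonempty).card := by
  rw [gcard, ← card_filter_fin_eq_range]
  congr 1
  apply Finset.filter_congr
  intro i _
  constructor
  · rintro ⟨e, heF, i', j', rfl, hiv⟩
    have hii : i' = i := Fin.ext hiv
    subst hii
    exact ⟨j', (mem_Fmap_inl n SL i' j').1 heF⟩
  · rintro ⟨j, hj⟩
    exact ⟨Sum.inl ⟨i, j⟩, (mem_Fmap_inl n SL i j).2 hj, i, j, rfl, rfl⟩

lemma card_Fmap (SL : Pt n) :
    (Fmap n SL).card = (∑ i, (SL.1 i).card) + SL.2.card := by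
  rw [show (Fmap n SL).card
    = ((Finset.univ.sigma SL.1).disjSum SL.2).card from rfl]
  rw [Finset.card_disjSum, Finset.card_sigma]

end Param

/-- For each `n ≥ 1`, the Tutte polynomial of the Schreier graph
`Γ_n` of the Grigorchuk group is
`T_n(x, y) = y^(2^n + 4) · x^(2^(n-1)) · (y + x)^(2^(n-1) - 1)`. -/
theorem tutte_grig (n : ℕ) (hn : 1 ≤ n) (x y : ℝ) :
    (grig n).tutte x y =
      y ^ (2 ^ n + 4) * x ^ (2 ^ (n - 1)) * (y + x) ^ (2 ^ (n - 1) - 1) := by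
  classical
  have hN : 1 ≤ 2 ^ n := Nat.one_le_two_pow
  have hM : 1 ≤ 2 ^ (n - 1) := Nat.one_le_two_pow
  have h2n : 2 ^ n = 2 * 2 ^ (n - 1) := by
    conv_lhs => rw [show n = (n - 1) + 1 by omega]
    rw [pow_succ]
    ring
  -- Step 1: reindex the sum
  have step1 : (grig n).tutte x y = ∑ SL : Pt n,
      (x - 1) ^ ((grig n).rk Finset.univ - (grig n).rk (Fmap n SL)) *
        (y - 1) ^ ((grig n).nullity (Fmap n SL)) := by
    rw [Multigraph.tutte, Finset.powerset_univ]
    exact (Fintype.sum_bijective (Fmap n) (Fmap_bijective n) _ _ (fun SL => rfl)).symm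
  -- Step 2: pointwise rewrite of the summand
  have step2 : ∀ SL : Pt n,
      (x - 1) ^ ((grig n).rk Finset.univ - (grig n).rk (Fmap n SL)) *
        (y - 1) ^ ((grig n).nullity (Fmap n SL))
      = (∏ i : Fin (2 ^ n - 1), gfun x y (if Even i.val then 1 else 2) (SL.1 i)) *
          (y - 1) ^ SL.2.card := by
    intro SL
    set δ : Fin (2 ^ n - 1) → ℕ := fun i => if (SL.1 i).Nonempty then 1 else 0 with hδ
    have hδle1 : ∀ i ∈ (Finset.univ : Finset (Fin (2 ^ n - 1))), δ i ≤ 1 := by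
      intro i _; simp only [hδ]; split <;> omega
    have hδlec : ∀ i ∈ (Finset.univ : Finset (Fin (2 ^ n - 1))), δ i ≤ (SL.1 i).card := by
      intro i _
      simp only [hδ]
      split
      · exact Finset.Nonempty.card_pos ‹_›
      · omega
    have hDsum : (Finset.univ.filter fun i : Fin (2 ^ n - 1) => (SL.1 i).Nonempty).card
        = ∑ i, δ i := Finset.card_filter _ _
    have hrkA : (grig n).rk (Fmap n SL) = ∑ i, δ i := by
      rw [rk_grig, gcard_Fmap, hDsum]
    have hrkU : (grig n).rk Finset.univ = 2 ^ n - 1 := by rw [rk_grig, gcard_univ]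
    have hsum1 : ∑ _i : Fin (2 ^ n - 1), (1 : ℕ) = 2 ^ n - 1 := by simp
    have e1 : (2 ^ n - 1) - ∑ i, δ i = ∑ i, (1 - δ i) := by
      rw [Finset.sum_tsub_distrib _ hδle1, hsum1]
    have e2 : (grig n).nullity (Fmap n SL)
        = SL.2.card + ∑ i, ((SL.1 i).card - δ i) := by
      rw [Multigraph.nullity, hrkA, card_Fmap,
        Finset.sum_tsub_distrib _ hδlec]
      have hDle : ∑ i, δ i ≤ ∑ i, (SL.1 i).card := Finset.sum_le_sum hδlec
      omega
    rw [hrkU, hrkA, e1, e2, pow_add, ← Finset.prod_pow_eq_pow_sum,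
      ← Finset.prod_pow_eq_pow_sum]
    simp only [gfun, hδ]
    rw [Finset.prod_mul_distrib]
    ring
  rw [step1]
  simp only [step2]
  rw [Fintype.sum_prod_type]
  dsimp only
  rw [← Fintype.sum_mul_sum]
  rw [← Fintype.prod_sum]
  -- per-gap sums
  have hgap : ∀ i : Fin (2 ^ n - 1),
      (∑ s : Finset (κt n i), gfun x y (if Even i.val then 1 else 2) s)
        = if Even i.val then x else x + y := by
    intro i
    rw [gap_sum _ (by split <;> simp)]
    by_cases h : Even i.val <;> simp [h]
  simp only [hgap]
  -- loop sum
  have hL : ∑ L : Finset (Loopt n), (y - 1) ^ L.card = y ^ (2 ^ n + 4) := by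
    rw [loop_sum]
    congr 1
    simp [Loopt]
  rw [hL]
  -- even/odd gap counts
  have hceven : ((Finset.univ : Finset (Fin (2 ^ n - 1))).filter
      (fun i => Even i.val)).card = 2 ^ (n - 1) := by
    rw [card_filter_fin_eq_range, card_range_even]
    omega
  have hctot : ((Finset.univ : Finset (Fin (2 ^ n - 1))).filter (fun i => Even i.val)).card
      + ((Finset.univ : Finset (Fin (2 ^ n - 1))).filter (fun i => ¬ Even i.val)).card
      = 2 ^ n - 1 := by
    rw [Finset.card_filter_add_card_filter_not, Finset.card_univ, Fintype.card_fin]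
  have hcodd : ((Finset.univ : Finset (Fin (2 ^ n - 1))).filter
      (fun i => ¬ Even i.val)).card = 2 ^ (n - 1) - 1 := by omega
  have hsplit := Finset.prod_filter_mul_prod_filter_not
    (Finset.univ : Finset (Fin (2 ^ n - 1))) (fun i => Even i.val)
    (fun i => if Even i.val then x else x + y)
  have hA : ∏ i ∈ (Finset.univ : Finset (Fin (2 ^ n - 1))).filter (fun i => Even i.val),
      (if Even i.val then x else x + y) = x ^ (2 ^ (n - 1)) := by
    rw [Finset.prod_congr rfl (fun i hi => if_pos (Finset.mem_filter.1 hi).2),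
      Finset.prod_const, hceven]
  have hB : ∏ i ∈ (Finset.univ : Finset (Fin (2 ^ n - 1))).filter (fun i => ¬ Even i.val),
      (if Even i.val then x else x + y) = (x + y) ^ (2 ^ (n - 1) - 1) := by
    rw [Finset.prod_congr rfl (fun i hi => if_neg (Finset.mem_filter.1 hi).2),
      Finset.prod_const, hcodd]
  rw [← hsplit, hA, hB]
  ring
end

section
/- For each n ≥ 1, the reliability polynomial of the Schreier graph Γ_n of the Grigorchuk group is R(Γ_n, p) = p^{2^n − 1} (2 − p)^{2^{n−1} − 1}. -/
section Helpers

open Finset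

/-- Subsets of a fintype correspond to boolean-valued functions. -/
def boolEquivFinset (α : Type*) [Fintype α] [DecidableEq α] : (α → Bool) ≃ Finset α where
  toFun f := Finset.univ.filter (fun a => f a = true)
  invFun A a := decide (a ∈ A)
  left_inv f := by funext a; simp
  right_inv A := by ext a; simp

/-- Sum of products over a pi type equals product of sums. -/
lemma sum_pi_prod {ι : Type*} [Fintype ι] [DecidableEq ι] (κ : ι → Type*)
    [∀ i, Fintype (κ i)] [∀ i, DecidableEq (κ i)] (H : ∀ i, κ i → ℝ) :
    ∑ g : ∀ i, κ i, ∏ i, H i (g i) = ∏ i, ∑ x : κ i, H i x := by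
  rw [Finset.prod_univ_sum, Fintype.piFinset_univ]

lemma local_sum (k : ℕ) (p : ℝ) :
    ∑ h : Fin k → Bool,
      (if ∃ j, h j = true then (1:ℝ) else 0) * ∏ j, (if h j = true then p else 1 - p)
      = 1 - (1 - p) ^ k := by
  classical
  have h1 : ∑ h : Fin k → Bool, ∏ j, (if h j = true then p else 1 - p) = 1 := by
    rw [sum_pi_prod (fun _ => Bool) (fun _ c => if c = true then p else 1 - p)]
    simp
  have h2 : ∑ h : Fin k → Bool,
      (if h = (fun _ => false) then (1:ℝ) else 0) * ∏ j, (if h j = true then p else 1 - p)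
      = (1 - p) ^ k := by
    rw [Finset.sum_eq_single (fun _ : Fin k => false)]
    · simp
    · intro h _ hne; rw [if_neg hne, zero_mul]
    · simp
  have key : ∀ h : Fin k → Bool,
      (if ∃ j, h j = true then (1:ℝ) else 0) = 1 - (if h = (fun _ => false) then (1:ℝ) else 0) := by
    intro h
    by_cases hc : ∃ j, h j = true
    · obtain ⟨j, hj⟩ := hc
      rw [if_pos ⟨j, hj⟩, if_neg, sub_zero]
      intro hall
      rw [hall] at hj; simp at hj
    · rw [if_neg hc, if_pos, sub_self]
      funext j
      by_contra hj
      exact hc ⟨j, by simpa using hj⟩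
  calc ∑ h : Fin k → Bool,
        (if ∃ j, h j = true then (1:ℝ) else 0) * ∏ j, (if h j = true then p else 1 - p)
      = ∑ h : Fin k → Bool,
        ((∏ j, (if h j = true then p else 1 - p))
          - (if h = (fun _ => false) then (1:ℝ) else 0) * ∏ j, (if h j = true then p else 1 - p)) := by
        refine Finset.sum_congr rfl fun h _ => ?_
        rw [key h]; ring
    _ = 1 - (1 - p) ^ k := by rw [Finset.sum_sub_distrib, h1, h2]

lemma card_even_range (N : ℕ) :
    ((Finset.range N).filter (fun x => Even x)).card = (N + 1) / 2 := by
  induction N with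
  | zero => simp
  | succ N ih =>
    rw [Finset.range_add_one, Finset.filter_insert]
    by_cases h : Even N
    · rw [if_pos h, Finset.card_insert_of_notMem (by simp), ih]
      obtain ⟨t, rfl⟩ := h; omega
    · rw [if_neg h, ih]
      rw [Nat.not_even_iff_odd] at h
      obtain ⟨t, rfl⟩ := h; omega

lemma card_even_fin (N : ℕ) :
    ((Finset.univ : Finset (Fin N)).filter (fun i => Even i.val)).card = (N + 1) / 2 := by
  rw [← card_even_range N]
  apply Finset.card_bij (fun a _ => a.val)
  · intro a ha
    simp only [Finset.mem_filter, Finset.mem_range, Finset.mem_univ, true_and] at ha ⊢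
    exact ⟨a.isLt, ha⟩
  · intro a _ b _ hab; exact Fin.ext hab
  · intro b hb
    simp only [Finset.mem_filter, Finset.mem_range] at hb
    exact ⟨⟨b, hb.1⟩, by simp [hb.2], rfl⟩

end Helpers

section Connectivity

/-- The covering condition: every gap carries at least one active edge. -/
def Cov (n : ℕ) (A : Finset (grig n).Edge) : Prop :=
  ∀ i : Fin (2 ^ n - 1),
    ∃ j : Fin (if Even i.val then 1 else 2), (Sum.inl ⟨i, j⟩ : (grig n).Edge) ∈ A

lemma grig_comps_eq_one_iff (n : ℕ) (A : Finset (grig n).Edge) :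
    (grig n).comps A = 1 ↔ Cov n A := by
  classical
  have hpos : 0 < 2 ^ n := Nat.pow_pos (by norm_num)
  set G := (grig n).toSimple A with hG
  rw [Multigraph.comps, Nat.card_eq_one_iff_unique]
  constructor
  · rintro ⟨hsub, -⟩ i
    by_contra hno
    push_neg at hno
    -- adjacency preserves the cut at gap i
    have key : ∀ u v : Fin (2 ^ n), G.Adj u v → (u.val ≤ i.val ↔ v.val ≤ i.val) := by
      intro u v hadj
      rw [hG, Multigraph.toSimple, SimpleGraph.fromRel_adj] at hadj
      obtain ⟨hne, h⟩ := hadj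
      have h' : ∃ e ∈ A, (grig n).inc e = s(u, v) := by
        rcases h with h | h
        · exact h
        · obtain ⟨e, he, hinc⟩ := h
          exact ⟨e, he, by rw [hinc, Sym2.eq_swap]⟩
      obtain ⟨e, he, hinc⟩ := h'
      match e with
      | Sum.inl ⟨i', j⟩ =>
        have hinc' : s(leftV n i', rightV n i') = s(u, v) := hinc
        have hii : i' ≠ i := by
          rintro rfl
          exact hno j he
        have hval : i'.val ≠ i.val := fun hv => hii (Fin.ext hv)
        rw [Sym2.eq_iff] at hinc'
        rcases hinc' with ⟨h1, h2⟩ | ⟨h1, h2⟩ <;>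
        · have hu := congrArg Fin.val h1
          have hv := congrArg Fin.val h2
          simp only [leftV, rightV] at hu hv
          omega
      | Sum.inr (Sum.inl w) =>
        have hinc' : s(w, w) = s(u, v) := hinc
        rw [Sym2.eq_iff] at hinc'
        rcases hinc' with ⟨h1, h2⟩ | ⟨h1, h2⟩ <;>
          first
          | exact absurd (h1.symm.trans h2) hne
          | exact absurd (h2.symm.trans h1) hne
      | Sum.inr (Sum.inr j) =>
        have hinc' : s(endV n j, endV n j) = s(u, v) := hinc
        rw [Sym2.eq_iff] at hinc'
        rcases hinc' with ⟨h1, h2⟩ | ⟨h1, h2⟩ <;>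
          first
          | exact absurd (h1.symm.trans h2) hne
          | exact absurd (h2.symm.trans h1) hne
    have inv : ∀ u v : Fin (2 ^ n), G.Reachable u v → (u.val ≤ i.val ↔ v.val ≤ i.val) := by
      intro u v huv
      obtain ⟨w⟩ := huv
      induction w with
      | nil => exact Iff.rfl
      | cons hadj _ ih => exact (key _ _ hadj).trans ih
    have hi1 : i.val < 2 ^ n := lt_of_lt_of_le i.isLt (Nat.sub_le _ _)
    have hi2 : i.val + 1 < 2 ^ n := by have := i.isLt; omega
    have hr : G.Reachable ⟨i.val, hi1⟩ ⟨i.val + 1, hi2⟩ :=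
      SimpleGraph.ConnectedComponent.exact
        (hsub.elim (G.connectedComponentMk ⟨i.val, hi1⟩) (G.connectedComponentMk ⟨i.val + 1, hi2⟩))
    have := inv _ _ hr
    simp at this
  · intro hcov
    have reach : ∀ m (hm : m < 2 ^ n), G.Reachable ⟨0, hpos⟩ ⟨m, hm⟩ := by
      intro m
      induction m with
      | zero => intro _; rfl
      | succ m ih =>
        intro hm
        have hm' : m < 2 ^ n := by omega
        have hgap : m < 2 ^ n - 1 := by omega
        obtain ⟨j, hj⟩ := hcov ⟨m, hgap⟩
        have hadj : G.Adj ⟨m, hm'⟩ ⟨m + 1, hm⟩ := by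
          rw [hG, Multigraph.toSimple, SimpleGraph.fromRel_adj]
          refine ⟨by simp [Fin.ext_iff], Or.inl ⟨Sum.inl ⟨⟨m, hgap⟩, j⟩, hj, rfl⟩⟩
        exact (ih hm').trans hadj.reachable
    refine ⟨⟨fun c d => ?_⟩, ⟨G.connectedComponentMk ⟨0, hpos⟩⟩⟩
    refine SimpleGraph.ConnectedComponent.ind₂ (fun u v => ?_) c d
    refine SimpleGraph.ConnectedComponent.sound ?_
    have := (reach u.val u.isLt).symm.trans (reach v.val v.isLt)
    rwa [Fin.eta, Fin.eta] at this

end Connectivity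

/-- For each `n ≥ 1`, the reliability polynomial of the Schreier
graph `Γ_n` of the Grigorchuk group is
`R(Γ_n, p) = p^(2^n - 1) · (2 - p)^(2^(n-1) - 1)`. -/
theorem reliability_grig (n : ℕ) (hn : 1 ≤ n) (p : ℝ) :
    (grig n).reliability p = p ^ (2 ^ n - 1) * (2 - p) ^ (2 ^ (n - 1) - 1) := by
  classical
  set E₁ := (Σ i : Fin (2 ^ n - 1), Fin (if Even i.val then 1 else 2)) with hE₁
  set E₂ := (Fin (2 ^ n) ⊕ Fin 4) with hE₂
  have step1 : (grig n).reliability p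
      = ∑ A : Finset (grig n).Edge,
          (if Cov n A then (1:ℝ) else 0) * ∏ e : (grig n).Edge, (if e ∈ A then p else 1 - p) := by
    rw [Multigraph.reliability, Finset.powerset_univ]
    refine Finset.sum_congr rfl fun A _ => ?_
    have hW : p ^ A.card * (1 - p) ^ (Fintype.card (grig n).Edge - A.card)
        = ∏ e : (grig n).Edge, (if e ∈ A then p else 1 - p) := by
      rw [Finset.prod_ite (fun _ => p) (fun _ => 1 - p), Finset.prod_const, Finset.prod_const,
        Finset.filter_univ_mem, Finset.filter_not, Finset.filter_univ_mem,
        ← Finset.compl_eq_univ_sdiff, Finset.card_compl]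
    rw [if_congr (grig_comps_eq_one_iff n A) rfl rfl]
    split_ifs with h
    · rw [one_mul, hW]
    · rw [zero_mul]
  have step2 : ∑ A : Finset (grig n).Edge,
          (if Cov n A then (1:ℝ) else 0) * ∏ e : (grig n).Edge, (if e ∈ A then p else 1 - p)
      = ∑ f : E₁ ⊕ E₂ → Bool,
          (if (∀ i : Fin (2 ^ n - 1), ∃ j, f (Sum.inl ⟨i, j⟩) = true) then (1:ℝ) else 0)
            * ∏ e : E₁ ⊕ E₂, (if f e = true then p else 1 - p) := by
    refine (Fintype.sum_equiv (boolEquivFinset (grig n).Edge) _ _ fun f => ?_).symm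
    congr 1
    · refine if_congr ?_ rfl rfl
      unfold Cov
      refine forall_congr' fun i => exists_congr fun j => ?_
      simp only [boolEquivFinset, Equiv.coe_fn_mk]
      have hm := fun a => @Finset.mem_filter (grig n).Edge (fun a => f a = true)
        (fun a => instDecidableEqBool (f a) true) Finset.univ a
      exact ⟨fun h => (hm _).2 ⟨Finset.mem_univ _, h⟩, fun h => ((hm _).1 h).2⟩
    · refine Finset.prod_congr rfl fun e _ => ?_
      simp only [boolEquivFinset, Equiv.coe_fn_mk]
      have hm := fun a => @Finset.mem_filter (grig n).Edge (fun a => f a = true)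
        (fun a => instDecidableEqBool (f a) true) Finset.univ a
      by_cases h : f e = true
      · rw [if_pos h]; exact (if_pos ((hm e).2 ⟨Finset.mem_univ _, h⟩)).symm
      · rw [if_neg h]; exact (if_neg (fun h' => h ((hm e).1 h').2)).symm
  have step3 : ∑ f : E₁ ⊕ E₂ → Bool,
          (if (∀ i : Fin (2 ^ n - 1), ∃ j, f (Sum.inl ⟨i, j⟩) = true) then (1:ℝ) else 0)
            * ∏ e : E₁ ⊕ E₂, (if f e = true then p else 1 - p)
      = (∑ f₁ : E₁ → Bool,
          (if (∀ i : Fin (2 ^ n - 1), ∃ j, f₁ ⟨i, j⟩ = true) then (1:ℝ) else 0)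
            * ∏ a : E₁, (if f₁ a = true then p else 1 - p))
        * (∑ f₂ : E₂ → Bool, ∏ b : E₂, (if f₂ b = true then p else 1 - p)) := by
    calc ∑ f : E₁ ⊕ E₂ → Bool,
          (if (∀ i : Fin (2 ^ n - 1), ∃ j, f (Sum.inl ⟨i, j⟩) = true) then (1:ℝ) else 0)
            * ∏ e : E₁ ⊕ E₂, (if f e = true then p else 1 - p)
        = ∑ x : (E₁ → Bool) × (E₂ → Bool),
            ((if (∀ i : Fin (2 ^ n - 1), ∃ j, x.1 ⟨i, j⟩ = true) then (1:ℝ) else 0)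
              * ∏ a : E₁, (if x.1 a = true then p else 1 - p))
              * ∏ b : E₂, (if x.2 b = true then p else 1 - p) := by
          refine Fintype.sum_equiv (Equiv.sumArrowEquivProdArrow E₁ E₂ Bool) _ _ fun f => ?_
          simp only [Equiv.sumArrowEquivProdArrow, Equiv.coe_fn_mk]
          rw [Fintype.prod_sum_type, ← mul_assoc]
          rfl
      _ = ∑ x₁ : E₁ → Bool, ∑ x₂ : E₂ → Bool,
            ((if (∀ i : Fin (2 ^ n - 1), ∃ j, x₁ ⟨i, j⟩ = true) then (1:ℝ) else 0)
              * ∏ a : E₁, (if x₁ a = true then p else 1 - p))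
              * ∏ b : E₂, (if x₂ b = true then p else 1 - p) := by
          rw [Fintype.sum_prod_type]
      _ = _ := by rw [Finset.sum_mul_sum]
  have hD : ∑ f₂ : E₂ → Bool, ∏ b : E₂, (if f₂ b = true then p else 1 - p) = 1 := by
    rw [sum_pi_prod (fun _ : E₂ => Bool) (fun _ c => if c = true then p else 1 - p)]
    have h1 : ∀ b : E₂, ∑ c : Bool, (if c = true then p else 1 - p) = 1 := by
      intro b; rw [Fintype.sum_bool]; norm_num
    rw [Finset.prod_congr rfl fun b _ => h1 b, Finset.prod_const, one_pow]
  have hC : ∑ f₁ : E₁ → Bool,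
          (if (∀ i : Fin (2 ^ n - 1), ∃ j, f₁ ⟨i, j⟩ = true) then (1:ℝ) else 0)
            * ∏ a : E₁, (if f₁ a = true then p else 1 - p)
      = ∏ i : Fin (2 ^ n - 1), (1 - (1 - p) ^ (if Even i.val then 1 else 2)) := by
    have hterm : ∀ f₁ : E₁ → Bool,
        (if (∀ i : Fin (2 ^ n - 1), ∃ j, f₁ ⟨i, j⟩ = true) then (1:ℝ) else 0)
            * ∏ a : E₁, (if f₁ a = true then p else 1 - p)
        = ∏ i : Fin (2 ^ n - 1),
            ((if ∃ j, f₁ ⟨i, j⟩ = true then (1:ℝ) else 0)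
              * ∏ j, (if f₁ ⟨i, j⟩ = true then p else 1 - p)) := by
      intro f₁
      refine Eq.symm ?_
      rw [Finset.prod_mul_distrib, Fintype.prod_boole]
      congr 1
      · congr
      · rw [Finset.prod_sigma', Finset.univ_sigma_univ]
    rw [Finset.sum_congr rfl fun f₁ _ => hterm f₁]
    rw [Fintype.sum_equiv (Equiv.piCurry fun (i : Fin (2 ^ n - 1))
          (_ : Fin (if Even i.val then 1 else 2)) => Bool)
        (fun f₁ : E₁ → Bool => ∏ i : Fin (2 ^ n - 1),
            ((if ∃ j, f₁ ⟨i, j⟩ = true then (1:ℝ) else 0)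
              * ∏ j, (if f₁ ⟨i, j⟩ = true then p else 1 - p)))
        (fun g => ∏ i : Fin (2 ^ n - 1),
            ((if ∃ j, g i j = true then (1:ℝ) else 0)
              * ∏ j, (if g i j = true then p else 1 - p)))
        (fun f₁ => rfl)]
    refine (sum_pi_prod (fun i : Fin (2 ^ n - 1) => Fin (if Even i.val then 1 else 2) → Bool)
        (fun i h => (if ∃ j, h j = true then (1:ℝ) else 0)
          * ∏ j, (if h j = true then p else 1 - p))).trans ?_
    exact Finset.prod_congr rfl fun i _ => local_sum _ p
  have h2 : 2 ^ n = 2 * 2 ^ (n - 1) := by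
    conv_lhs => rw [show n = (n - 1) + 1 by omega]
    rw [pow_succ]; ring
  have hpow : 0 < 2 ^ (n - 1) := Nat.pow_pos (by norm_num)
  have ha : ((Finset.univ : Finset (Fin (2 ^ n - 1))).filter (fun i => Even i.val)).card
      = 2 ^ (n - 1) := by
    rw [card_even_fin]; omega
  have hb : ((Finset.univ : Finset (Fin (2 ^ n - 1))).filter (fun i => ¬ Even i.val)).card
      = 2 ^ (n - 1) - 1 := by
    have := Finset.card_filter_add_card_filter_not
      (s := (Finset.univ : Finset (Fin (2 ^ n - 1)))) (p := fun i => Even i.val)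
    rw [ha, Finset.card_univ, Fintype.card_fin] at this
    omega
  have hprod : ∏ i : Fin (2 ^ n - 1), (1 - (1 - p) ^ (if Even i.val then 1 else 2))
      = p ^ (2 ^ n - 1) * (2 - p) ^ (2 ^ (n - 1) - 1) := by
    have hsplit : ∀ i : Fin (2 ^ n - 1),
        (1 - (1 - p) ^ (if Even i.val then 1 else 2))
          = if Even i.val then 1 - (1 - p) ^ 1 else 1 - (1 - p) ^ 2 := by
      intro i; split_ifs <;> rfl
    rw [Finset.prod_congr rfl fun i _ => hsplit i,
      Finset.prod_ite (fun _ => 1 - (1 - p) ^ 1) (fun _ => 1 - (1 - p) ^ 2),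
      Finset.prod_const, Finset.prod_const, ha, hb]
    have e1 : 1 - (1 - p) ^ 1 = p := by ring
    have e2 : 1 - (1 - p) ^ 2 = p * (2 - p) := by ring
    rw [e1, e2, mul_pow, ← mul_assoc, ← pow_add]
    congr 2
    omega
  rw [step1, step2, step3, hD, hC, hprod, mul_one]
end

section
/- For each n ≥ 1, the number of spanning trees (complexity) of the Schreier graph Γ_n of the Grigorchuk group is τ(Γ_n) = 2^{2^{n−1} − 1}. -/
section Aux

open Finset

variable {n : ℕ}

lemma leftV_ne_rightV (i : Fin (2 ^ n - 1)) : leftV n i ≠ rightV n i := by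
  simp [leftV, rightV, Fin.ext_iff]

lemma grig_adj {A : Finset (grig n).Edge} {u v : Fin (2 ^ n)} :
    ((grig n).toSimple A).Adj u v ↔
      ∃ i : Fin (2 ^ n - 1), (∃ k, Sum.inl ⟨i, k⟩ ∈ A) ∧
        ((u = leftV n i ∧ v = rightV n i) ∨ (u = rightV n i ∧ v = leftV n i)) := by
  rw [Multigraph.toSimple, SimpleGraph.fromRel_adj]
  constructor
  · rintro ⟨hne, h⟩
    have h' : ∃ e ∈ A, (grig n).inc e = s(u, v) := by
      rcases h with ⟨e, he, hinc⟩ | ⟨e, he, hinc⟩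
      · exact ⟨e, he, hinc⟩
      · exact ⟨e, he, by rw [hinc, Sym2.eq_swap]⟩
    obtain ⟨e, heA, hinc⟩ := h'
    match e with
    | Sum.inl ⟨i, k⟩ =>
        refine ⟨i, ⟨k, heA⟩, ?_⟩
        have h2 : s(leftV n i, rightV n i) = s(u, v) := hinc
        rw [Sym2.eq_iff] at h2
        tauto
    | Sum.inr (Sum.inl w) =>
        have h2 : s(w, w) = s(u, v) := hinc
        rw [Sym2.eq_iff] at h2
        rcases h2 with ⟨rfl, rfl⟩ | ⟨rfl, rfl⟩ <;> exact absurd rfl hne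
    | Sum.inr (Sum.inr j) =>
        have h2 : s(endV n j, endV n j) = s(u, v) := hinc
        rw [Sym2.eq_iff] at h2
        rcases h2 with ⟨rfl, rfl⟩ | ⟨rfl, rfl⟩ <;> exact absurd rfl hne
  · rintro ⟨i, ⟨k, hk⟩, ⟨rfl, rfl⟩ | ⟨rfl, rfl⟩⟩
    · exact ⟨leftV_ne_rightV i, Or.inl ⟨Sum.inl ⟨i, k⟩, hk, rfl⟩⟩
    · exact ⟨(leftV_ne_rightV i).symm, Or.inr ⟨Sum.inl ⟨i, k⟩, hk, rfl⟩⟩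

lemma reach_le {A : Finset (grig n).Edge} {i₀ : Fin (2 ^ n - 1)}
    (hun : ∀ k, Sum.inl ⟨i₀, k⟩ ∉ A) {u v : Fin (2 ^ n)}
    (h : ((grig n).toSimple A).Reachable u v) :
    (u.val ≤ i₀.val ↔ v.val ≤ i₀.val) := by
  obtain ⟨w⟩ := h
  induction w with
  | nil => exact Iff.rfl
  | @cons a b c hadj p ih =>
      refine Iff.trans ?_ ih
      rw [grig_adj] at hadj
      obtain ⟨i, ⟨k, hk⟩, hc⟩ := hadj
      have hne : i.val ≠ i₀.val := by
        intro h
        have hii : i₀ = i := Fin.ext h.symm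
        subst hii
        exact hun k hk
      rcases hc with ⟨rfl, rfl⟩ | ⟨rfl, rfl⟩ <;>
        · show _ ↔ _
          simp only [leftV, rightV]
          omega

lemma connected_of_covered {A : Finset (grig n).Edge}
    (hcov : ∀ i : Fin (2 ^ n - 1), ∃ k, Sum.inl ⟨i, k⟩ ∈ A) :
    ((grig n).toSimple A).Connected := by
  have h0 : (0 : ℕ) < 2 ^ n := by positivity
  rw [SimpleGraph.connected_iff]
  refine ⟨?_, ⟨⟨0, h0⟩⟩⟩
  have key : ∀ m (hm : m < 2 ^ n), ((grig n).toSimple A).Reachable ⟨0, h0⟩ ⟨m, hm⟩ := by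
    intro m
    induction m with
    | zero => intro hm; exact SimpleGraph.Reachable.refl _
    | succ m ih =>
        intro hm
        have hm' : m < 2 ^ n := by omega
        have hgap : m < 2 ^ n - 1 := by omega
        obtain ⟨k, hk⟩ := hcov ⟨m, hgap⟩
        have hadj : ((grig n).toSimple A).Adj ⟨m, hm'⟩ ⟨m + 1, hm⟩ := by
          rw [grig_adj]
          exact ⟨⟨m, hgap⟩, ⟨k, hk⟩, Or.inl ⟨rfl, rfl⟩⟩
        exact (ih hm').trans hadj.reachable
  intro u v
  exact (key u.val u.isLt).symm.trans (key v.val v.isLt)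

lemma comps_eq_one_iff {A : Finset (grig n).Edge} :
    (grig n).comps A = 1 ↔ ∀ i : Fin (2 ^ n - 1), ∃ k, Sum.inl ⟨i, k⟩ ∈ A := by
  constructor
  · intro h i
    by_contra hun
    push_neg at hun
    rw [Multigraph.comps, Nat.card_eq_one_iff_unique] at h
    obtain ⟨hs, _⟩ := h
    have h0 : (0 : ℕ) < 2 ^ n := by positivity
    have hlt : 2 ^ n - 1 < 2 ^ n := by omega
    have heq := hs.allEq (((grig n).toSimple A).connectedComponentMk ⟨0, h0⟩)
        (((grig n).toSimple A).connectedComponentMk ⟨2 ^ n - 1, hlt⟩)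
    have hre := SimpleGraph.ConnectedComponent.exact heq
    have hiff := reach_le hun hre
    have hi := i.isLt
    simp only at hiff
    omega
  · intro hcov
    have hc := connected_of_covered hcov
    rw [Multigraph.comps, Nat.card_eq_one_iff_unique]
    refine ⟨⟨fun a b => ?_⟩, ⟨((grig n).toSimple A).connectedComponentMk ⟨0, by positivity⟩⟩⟩
    refine SimpleGraph.ConnectedComponent.ind₂ (fun u v => ?_) a b
    exact SimpleGraph.ConnectedComponent.sound (hc.preconnected u v)

lemma prod_if_even (m : ℕ) :
    ∏ i ∈ Finset.range m, (if Even i then 1 else 2) = 2 ^ (m / 2) := by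
  induction m with
  | zero => simp
  | succ m ih =>
      rw [Finset.prod_range_succ, ih]
      by_cases h : Even m
      · have hm : m % 2 = 0 := Nat.even_iff.mp h
        rw [if_pos h, mul_one]
        congr 1
        omega
      · have hm : m % 2 = 1 := Nat.odd_iff.mp (Nat.not_even_iff_odd.mp h)
        rw [if_neg h, ← pow_succ]
        congr 1
        omega

end Aux

/-- For each `n ≥ 1`, the number of spanning trees (complexity)
of the Schreier graph `Γ_n` of the Grigorchuk group is `τ(Γ_n) = 2^(2^(n-1) - 1)`. -/
theorem treeCount_grig (n : ℕ) (hn : 1 ≤ n) :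
    (grig n).treeCount = 2 ^ (2 ^ (n - 1) - 1) := by
  classical
  have h2 : 2 * 2 ^ (n - 1) = 2 ^ n := by
    rw [← pow_succ']
    congr 1
    omega
  have hN1 : (0 : ℕ) < 2 ^ n := by positivity
  have hN2 : (0 : ℕ) < 2 ^ (n - 1) := by positivity
  -- the map from gap-choices to spanning trees
  let F : (∀ i : Fin (2 ^ n - 1), Fin (if Even i.val then 1 else 2)) →
      {A : Finset (grig n).Edge //
        (grig n).comps A = 1 ∧ A.card + 1 = Fintype.card (Fin (2 ^ n))} := by
    intro f
    refine ⟨Finset.image (fun i => Sum.inl ⟨i, f i⟩) Finset.univ, ?_, ?_⟩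
    · rw [comps_eq_one_iff]
      intro i
      exact ⟨f i, Finset.mem_image.mpr ⟨i, Finset.mem_univ i, rfl⟩⟩
    · have hinj : Function.Injective
          (fun i : Fin (2 ^ n - 1) => (Sum.inl ⟨i, f i⟩ : (grig n).Edge)) := by
        intro a b h
        exact congrArg Sigma.fst (Sum.inl.inj h)
      erw [Finset.card_image_of_injective _ hinj]; rw [Finset.card_univ, Fintype.card_fin,
        Fintype.card_fin]
      omega
  have hinjF : Function.Injective F := by
    intro f f' h
    have himg : Finset.image (fun i => (Sum.inl ⟨i, f i⟩ : (grig n).Edge)) Finset.univ =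
        Finset.image (fun i => (Sum.inl ⟨i, f' i⟩ : (grig n).Edge)) Finset.univ :=
      congrArg Subtype.val h
    funext i
    have hmem : (Sum.inl ⟨i, f i⟩ : (grig n).Edge) ∈
        Finset.image (fun i => (Sum.inl ⟨i, f' i⟩ : (grig n).Edge)) Finset.univ := by
      rw [← himg]
      exact Finset.mem_image.mpr ⟨i, Finset.mem_univ i, rfl⟩
    obtain ⟨j, _, hj⟩ := Finset.mem_image.mp hmem
    obtain ⟨rfl, hb⟩ := Sigma.mk.inj_iff.mp (Sum.inl.inj hj)
    exact (heq_iff_eq.mp hb).symm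
  have hsurjF : Function.Surjective F := by
    rintro ⟨A, hA1, hA2⟩
    have hcov := comps_eq_one_iff.mp hA1
    refine ⟨fun i => Classical.choose (hcov i), ?_⟩
    have hmem : ∀ i : Fin (2 ^ n - 1),
        (Sum.inl ⟨i, Classical.choose (hcov i)⟩ : (grig n).Edge) ∈ A :=
      fun i => Classical.choose_spec (hcov i)
    apply Subtype.ext
    show Finset.image _ Finset.univ = A
    have hsub : Finset.image
        (fun i : Fin (2 ^ n - 1) =>
          (Sum.inl ⟨i, Classical.choose (hcov i)⟩ : (grig n).Edge)) Finset.univ ⊆ A := by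
      intro e he
      obtain ⟨i, _, rfl⟩ := Finset.mem_image.mp he
      exact hmem i
    have hinj : Function.Injective
        (fun i : Fin (2 ^ n - 1) =>
          (Sum.inl ⟨i, Classical.choose (hcov i)⟩ : (grig n).Edge)) := by
      intro a b h
      exact congrArg Sigma.fst (Sum.inl.inj h)
    have hcard : A.card = 2 ^ n - 1 := by
      rw [Fintype.card_fin] at hA2
      omega
    refine Finset.eq_of_subset_of_card_le hsub ?_
    erw [Finset.card_image_of_injective _ hinj]; rw [Finset.card_univ, Fintype.card_fin, hcard]
  have hbij := Nat.card_eq_of_bijective F ⟨hinjF, hsurjF⟩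
  rw [Multigraph.treeCount, ← hbij, Nat.card_eq_fintype_card, Fintype.card_pi]
  simp only [Fintype.card_fin]
  rw [Fin.prod_univ_eq_prod_range (fun i => if Even i then 1 else 2) (2 ^ n - 1),
    prod_if_even]
  congr 1
  omega
end

section
/- For each n ≥ 1, the number of connected spanning subgraphs of the Schreier graph Γ_n of the Grigorchuk group is 2^{2^n + 4} · 3^{2^{n−1} − 1}. -/
-- comps = 1 iff connected
lemma comps_eq_one_iff_connected {V : Type} [Fintype V] [DecidableEq V]
    (G : Multigraph V) (A : Finset G.Edge) :
    G.comps A = 1 ↔ (G.toSimple A).Connected := by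
  rw [Multigraph.comps, Nat.card_eq_one_iff_unique]
  constructor
  · rintro ⟨hs, ⟨c⟩⟩
    obtain ⟨v, -⟩ := c.exists_rep
    haveI : Nonempty V := ⟨v⟩
    haveI := hs
    exact SimpleGraph.Connected.mk
      fun u w => SimpleGraph.ConnectedComponent.exact (Subsingleton.elim _ _)
  · intro hc
    haveI := hc.nonempty
    refine ⟨⟨fun c d => ?_⟩, ⟨(G.toSimple A).connectedComponentMk (Classical.arbitrary V)⟩⟩
    refine SimpleGraph.ConnectedComponent.ind₂ (fun u v => ?_) c d
    exact SimpleGraph.ConnectedComponent.sound (hc.preconnected u v)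

lemma grig_connected_iff (n : ℕ) (A : Finset (grig n).Edge) :
    ((grig n).toSimple A).Connected ↔
      ∀ i : Fin (2 ^ n - 1), ∃ j, (Sum.inl ⟨i, j⟩ : (grig n).Edge) ∈ A := by
  constructor
  · intro hc i
    by_contra hno
    push_neg at hno
    have key : ∀ {u v : Fin (2 ^ n)}, ((grig n).toSimple A).Adj u v →
        (u.val ≤ i.val ↔ v.val ≤ i.val) := by
      intro u v h
      rw [Multigraph.toSimple, SimpleGraph.fromRel_adj] at h
      obtain ⟨hne, h | h⟩ := h <;> obtain ⟨e, heA, heq⟩ := h <;>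
        rcases e with ⟨i', j⟩ | (w | j) <;>
        simp only [grig, Sym2.eq_iff] at heq
      · have hii : i' ≠ i := by rintro rfl; exact hno j heA
        have hiv : i'.val ≠ i.val := fun hv => hii (Fin.ext hv)
        rcases heq with ⟨h1, h2⟩ | ⟨h1, h2⟩ <;>
          simp only [leftV, rightV, Fin.ext_iff] at h1 h2 <;> omega
      · rcases heq with ⟨h1, h2⟩ | ⟨h1, h2⟩ <;>
          first
          | exact absurd (h1.symm.trans h2) hne
          | exact absurd (h1.symm.trans h2) (Ne.symm hne)
      · rcases heq with ⟨h1, h2⟩ | ⟨h1, h2⟩ <;>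
          first
          | exact absurd (h1.symm.trans h2) hne
          | exact absurd (h1.symm.trans h2) (Ne.symm hne)
      · have hii : i' ≠ i := by rintro rfl; exact hno j heA
        have hiv : i'.val ≠ i.val := fun hv => hii (Fin.ext hv)
        rcases heq with ⟨h1, h2⟩ | ⟨h1, h2⟩ <;>
          simp only [leftV, rightV, Fin.ext_iff] at h1 h2 <;> omega
      · rcases heq with ⟨h1, h2⟩ | ⟨h1, h2⟩ <;>
          first
          | exact absurd (h1.symm.trans h2) hne
          | exact absurd (h1.symm.trans h2) (Ne.symm hne)
      · rcases heq with ⟨h1, h2⟩ | ⟨h1, h2⟩ <;>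
          first
          | exact absurd (h1.symm.trans h2) hne
          | exact absurd (h1.symm.trans h2) (Ne.symm hne)
    have reach : ∀ {u v : Fin (2 ^ n)}, ((grig n).toSimple A).Reachable u v →
        (u.val ≤ i.val ↔ v.val ≤ i.val) := by
      intro u v h
      obtain ⟨w⟩ := h
      induction w with
      | nil => exact Iff.rfl
      | cons h p ih => exact (key h).trans ih
    have := reach (hc.preconnected (leftV n i) (rightV n i))
    simp only [leftV, rightV] at this
    omega
  · intro h
    haveI hne : Nonempty (Fin (2 ^ n)) := ⟨⟨0, by positivity⟩⟩
    have hadj : ∀ k (hk : k < 2 ^ n - 1),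
        ((grig n).toSimple A).Adj ⟨k, by omega⟩ ⟨k + 1, by omega⟩ := by
      intro k hk
      obtain ⟨j, hj⟩ := h ⟨k, hk⟩
      rw [Multigraph.toSimple, SimpleGraph.fromRel_adj]
      exact ⟨by simp [Fin.ext_iff], Or.inl ⟨Sum.inl ⟨⟨k, hk⟩, j⟩, hj, rfl⟩⟩
    have hreach : ∀ k (hk : k < 2 ^ n),
        ((grig n).toSimple A).Reachable ⟨0, by positivity⟩ ⟨k, hk⟩ := by
      intro k
      induction k with
      | zero => exact fun hk => SimpleGraph.Reachable.refl _
      | succ m ih =>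
        intro hk
        exact (ih (by omega)).trans (hadj m (by omega)).reachable
    exact SimpleGraph.Connected.mk fun u v =>
      ((hreach u.val u.isLt).symm.trans (hreach v.val v.isLt))

def finsetEquivBoolFun (α : Type*) [Fintype α] [DecidableEq α] : Finset α ≃ (α → Bool) where
  toFun A e := decide (e ∈ A)
  invFun f := Finset.univ.filter fun e => f e = true
  left_inv A := by ext e; simp
  right_inv f := by funext e; simp

lemma card_boolfun_exists (m : ℕ) :
    Nat.card {g : Fin m → Bool // ∃ j, g j = true} = 2 ^ m - 1 := by
  rw [Nat.card_eq_fintype_card]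
  have h1 : Fintype.card {g : Fin m → Bool // ¬∃ j, g j = true} = 1 := by
    rw [Fintype.card_eq_one_iff]
    refine ⟨⟨fun _ => false, by simp⟩, ?_⟩
    rintro ⟨g, hg⟩
    push_neg at hg
    exact Subtype.ext (funext fun j => by simpa using hg j)
  have h2 : Fintype.card {g : Fin m → Bool // ¬∃ j, g j = true} =
      Fintype.card (Fin m → Bool) - Fintype.card {g : Fin m → Bool // ∃ j, g j = true} :=
    Fintype.card_subtype_compl _
  have h3 : Fintype.card {g : Fin m → Bool // ∃ j, g j = true} ≤
      Fintype.card (Fin m → Bool) := Fintype.card_subtype_le _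
  have hcard : Fintype.card (Fin m → Bool) = 2 ^ m := by simp
  rw [hcard] at h2 h3
  set a := Fintype.card {g : Fin m → Bool // ∃ j, g j = true} with ha
  set b := Fintype.card {g : Fin m → Bool // ¬∃ j, g j = true} with hb
  clear_value a b
  clear ha hb hcard
  omega

lemma card_not_even_range (M : ℕ) :
    ((Finset.range M).filter fun k => ¬ Even k).card = M / 2 := by
  induction M with
  | zero => simp
  | succ m ih =>
    rw [Finset.range_add_one, Finset.filter_insert]
    by_cases h : Even m
    · rw [if_neg (by simpa using h), ih]
      obtain ⟨r, rfl⟩ := h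
      omega
    · rw [if_pos h, Finset.card_insert_of_notMem (by simp), ih]
      obtain ⟨r, rfl⟩ := Nat.not_even_iff_odd.mp h
      omega

lemma card_fin_not_even (M : ℕ) :
    (Finset.univ.filter fun i : Fin M => ¬ Even i.val).card = M / 2 := by
  rw [Finset.card_filter, Fin.sum_univ_eq_sum_range (fun k => if ¬ Even k then 1 else 0),
    ← Finset.card_filter]
  exact card_not_even_range M


/-- For each `n ≥ 1`, the number of connected spanning subgraphs
of the Schreier graph `Γ_n` of the Grigorchuk group is
`2^(2^n + 4) · 3^(2^(n-1) - 1)`. -/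
theorem connCount_grig (n : ℕ) (hn : 1 ≤ n) :
    (grig n).connCount = 2 ^ (2 ^ n + 4) * 3 ^ (2 ^ (n - 1) - 1) := by
  classical
  have key : ∀ A : Finset (grig n).Edge, (grig n).comps A = 1 ↔
      ∀ i : Fin (2 ^ n - 1), ∃ j, (Sum.inl ⟨i, j⟩ : (grig n).Edge) ∈ A := fun A =>
    (comps_eq_one_iff_connected _ A).trans (grig_connected_iff n A)
  rw [Multigraph.connCount]
  have e1 : {A : Finset (grig n).Edge // (grig n).comps A = 1} ≃
      {f : ((Σ i : Fin (2 ^ n - 1), Fin (if Even i.val then 1 else 2)) ⊕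
          (Fin (2 ^ n) ⊕ Fin 4)) → Bool //
        ∀ i : Fin (2 ^ n - 1), ∃ j, f (Sum.inl ⟨i, j⟩) = true} :=
    (finsetEquivBoolFun _).subtypeEquiv fun A =>
      (key A).trans (by simp [finsetEquivBoolFun]; exact Iff.rfl)
  have e2 : {f : ((Σ i : Fin (2 ^ n - 1), Fin (if Even i.val then 1 else 2)) ⊕
          (Fin (2 ^ n) ⊕ Fin 4)) → Bool //
        ∀ i : Fin (2 ^ n - 1), ∃ j, f (Sum.inl ⟨i, j⟩) = true} ≃
      {x : ((Σ i : Fin (2 ^ n - 1), Fin (if Even i.val then 1 else 2)) → Bool) ×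
          ((Fin (2 ^ n) ⊕ Fin 4) → Bool) //
        ∀ i : Fin (2 ^ n - 1), ∃ j, x.1 ⟨i, j⟩ = true} :=
    (Equiv.sumArrowEquivProdArrow _ _ _).subtypeEquiv fun f => Iff.rfl
  have e3 := Equiv.prodSubtypeFstEquivSubtypeProd
    (p := fun g : (Σ i : Fin (2 ^ n - 1), Fin (if Even i.val then 1 else 2)) → Bool =>
      ∀ i : Fin (2 ^ n - 1), ∃ j, g ⟨i, j⟩ = true)
    (β := (Fin (2 ^ n) ⊕ Fin 4) → Bool)
  have e4 : {g : (Σ i : Fin (2 ^ n - 1), Fin (if Even i.val then 1 else 2)) → Bool //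
        ∀ i : Fin (2 ^ n - 1), ∃ j, g ⟨i, j⟩ = true} ≃
      ∀ i : Fin (2 ^ n - 1), {g : Fin (if Even i.val then 1 else 2) → Bool //
        ∃ j, g j = true} :=
    Equiv.trans
      ((Equiv.piCurry fun _ _ => Bool).subtypeEquiv
        (q := fun h : ∀ i : Fin (2 ^ n - 1), Fin (if Even i.val then 1 else 2) → Bool =>
          ∀ i, ∃ j, h i j = true) fun g => Iff.rfl)
      (Equiv.subtypePiEquivPi
        (p := fun (i : Fin (2 ^ n - 1)) (g : Fin (if Even i.val then 1 else 2) → Bool) =>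
          ∃ j, g j = true))
  rw [Nat.card_congr ((e1.trans e2).trans e3), Nat.card_prod, Nat.card_congr e4,
    Nat.card_pi]
  have hfac : ∀ i : Fin (2 ^ n - 1),
      Nat.card {g : Fin (if Even i.val then 1 else 2) → Bool // ∃ j, g j = true} =
        if Even i.val then 1 else 3 := by
    intro i
    rw [card_boolfun_exists]
    split <;> norm_num
  rw [Finset.prod_congr rfl fun i _ => hfac i, Finset.prod_ite, Finset.prod_const,
    Finset.prod_const, one_pow, one_mul, card_fin_not_even]
  have hB : Nat.card ((Fin (2 ^ n) ⊕ Fin 4) → Bool) = 2 ^ (2 ^ n + 4) := by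
    rw [Nat.card_fun, Nat.card_sum]
    simp
  rw [hB]
  have h2n : 2 ^ n = 2 * 2 ^ (n - 1) := by
    conv_lhs => rw [show n = (n - 1) + 1 by omega]
    ring
  have : (2 ^ n - 1) / 2 = 2 ^ (n - 1) - 1 := by omega
  rw [this, mul_comm]
end

section
/- For each n ≥ 1, the number of spanning forests of the Schreier graph Γ_n of the Grigorchuk group is 2^{2^{n−1}} · 3^{2^{n−1} − 1}. -/
namespace GrigAux

open Finset Classical

variable (n : ℕ)

abbrev Gap := Fin (2 ^ n - 1)
abbrev E := (Σ i : Fin (2 ^ n - 1), Fin (if Even i.val then 1 else 2)) ⊕ (Fin (2 ^ n) ⊕ Fin 4)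

abbrev mult (i : Gap n) : ℕ := if Even i.val then 1 else 2

lemma mult_pos (i : Gap n) : 0 < mult n i := by
  show 0 < if Even i.val then 1 else 2
  split <;> omega

open Classical in
noncomputable def S (A : Finset (E n)) : Finset (Gap n) :=
  Finset.univ.filter fun i => ∃ m : Fin (mult n i), (Sum.inl ⟨i, m⟩ : E n) ∈ A

lemma mem_S {A : Finset (E n)} {i : Gap n} :
    i ∈ S n A ↔ ∃ m : Fin (mult n i), (Sum.inl ⟨i, m⟩ : E n) ∈ A := by
  simp [S]

def covered (A : Finset (E n)) (k : ℕ) : Prop :=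
  ∃ hk : k < 2 ^ n - 1, (⟨k, hk⟩ : Gap n) ∈ S n A

def P (A : Finset (E n)) (m : ℕ) : Prop := m = 0 ∨ ¬ covered n A (m - 1)

open Classical in
noncomputable def rep (A : Finset (E n)) (v : ℕ) : ℕ := Nat.findGreatest (P n A) v

lemma rep_le (A : Finset (E n)) (v : ℕ) : rep n A v ≤ v := Nat.findGreatest_le v

lemma P_rep (A : Finset (E n)) (v : ℕ) : P n A (rep n A v) :=
  Nat.findGreatest_spec (Nat.zero_le v) (Or.inl rfl)

lemma covered_of_between {A : Finset (E n)} {v k : ℕ} (h1 : rep n A v ≤ k) (h2 : k < v) :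
    covered n A k := by
  have h := Nat.findGreatest_is_greatest (P := P n A)
    (show rep n A v < k + 1 by omega) (show k + 1 ≤ v by omega)
  simp only [P] at h
  push_neg at h
  simpa using h.2

lemma rep_eq_self_of_P {A : Finset (E n)} {v : ℕ} (h : P n A v) : rep n A v = v :=
  Nat.findGreatest_eq h

lemma rep_succ_of_covered {A : Finset (E n)} {k : ℕ} (h : covered n A k) :
    rep n A (k + 1) = rep n A k := by
  simp only [rep, Nat.findGreatest_succ]
  rw [if_neg]
  simp only [P]
  push_neg
  exact ⟨by omega, by simpa using h⟩

lemma adj_iff (A : Finset (E n)) (u v : Fin (2 ^ n)) :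
    ((grig n).toSimple A).Adj u v ↔
      ∃ i : Gap n, i ∈ S n A ∧
        ((u.val = i.val ∧ v.val = i.val + 1) ∨ (v.val = i.val ∧ u.val = i.val + 1)) := by
  unfold Multigraph.toSimple; rw [SimpleGraph.fromRel_adj]
  constructor
  · rintro ⟨hne, h | h⟩ <;>
    · obtain ⟨e, he, hinc⟩ := h
      rcases e with ⟨i, m⟩ | (w | j)
      · have : s(leftV n i, rightV n i) = _ := hinc
        rw [Sym2.eq_iff] at this
        refine ⟨i, mem_S n |>.mpr ⟨m, he⟩, ?_⟩
        rcases this with ⟨h1, h2⟩ | ⟨h1, h2⟩ <;>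
          simp [leftV, rightV, Fin.ext_iff] at h1 h2 <;> omega
      · have : s(w, w) = _ := hinc
        rw [Sym2.eq_iff] at this
        exact absurd (by rcases this with ⟨h1, h2⟩ | ⟨h1, h2⟩ <;> omega : False) (by simp)
      · have : s(endV n j, endV n j) = _ := hinc
        rw [Sym2.eq_iff] at this
        exact absurd (by rcases this with ⟨h1, h2⟩ | ⟨h1, h2⟩ <;> omega : False) (by simp)
  · rintro ⟨i, hi, hc⟩
    obtain ⟨m, hm⟩ := mem_S n |>.mp hi
    refine ⟨by rintro rfl; omega, ?_⟩
    rcases hc with ⟨h1, h2⟩ | ⟨h1, h2⟩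
    · left
      refine ⟨Sum.inl ⟨i, m⟩, hm, ?_⟩
      show s(leftV n i, rightV n i) = s(u, v)
      rw [show u = leftV n i from Fin.ext h1, show v = rightV n i from Fin.ext h2]
    · right
      refine ⟨Sum.inl ⟨i, m⟩, hm, ?_⟩
      show s(leftV n i, rightV n i) = s(v, u)
      rw [show v = leftV n i from Fin.ext h1, show u = rightV n i from Fin.ext h2]

lemma rep_eq_of_adj {A : Finset (E n)} {u v : Fin (2 ^ n)}
    (h : ((grig n).toSimple A).Adj u v) : rep n A u.val = rep n A v.val := by
  rw [adj_iff] at h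
  obtain ⟨i, hi, h | h⟩ := h
  · have hc : covered n A i.val := ⟨i.isLt, by simpa using hi⟩
    rw [h.1, h.2]
    exact (rep_succ_of_covered n hc).symm
  · have hc : covered n A i.val := ⟨i.isLt, by simpa using hi⟩
    rw [h.1, h.2]
    exact rep_succ_of_covered n hc

lemma rep_lt (A : Finset (E n)) (v : Fin (2 ^ n)) : rep n A v.val < 2 ^ n :=
  lt_of_le_of_lt (rep_le n A v.val) v.isLt

lemma reachable_rep_aux (A : Finset (E n)) :
    ∀ (k : ℕ) (v : Fin (2 ^ n)), v.val ≤ k →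
      ((grig n).toSimple A).Reachable v ⟨rep n A v.val, rep_lt n A v⟩ := by
  intro k
  induction k with
  | zero =>
    intro v hv
    have h : rep n A v.val = v.val := by have := rep_le n A v.val; omega
    have he : (⟨rep n A v.val, rep_lt n A v⟩ : Fin (2 ^ n)) = v := Fin.ext h
    rw [he]
  | succ k ih =>
    intro v hv
    by_cases h : rep n A v.val = v.val
    · have he : (⟨rep n A v.val, rep_lt n A v⟩ : Fin (2 ^ n)) = v := Fin.ext h
      rw [he]
    · have hlt : rep n A v.val < v.val := lt_of_le_of_ne (rep_le n A v.val) h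
      have hv1 : 1 ≤ v.val := by omega
      have hcov : covered n A (v.val - 1) :=
        covered_of_between n (v := v.val) (k := v.val - 1) (by omega) (by omega)
      obtain ⟨hklt, hmem⟩ := hcov
      set u : Fin (2 ^ n) := ⟨v.val - 1, by omega⟩ with hu
      have hadj : ((grig n).toSimple A).Adj u v := by
        rw [adj_iff]
        refine ⟨⟨v.val - 1, hklt⟩, hmem, Or.inl ⟨rfl, ?_⟩⟩
        show v.val = (v.val - 1) + 1
        omega
      have hrepeq : rep n A u.val = rep n A v.val := rep_eq_of_adj n hadj
      have hreach : ((grig n).toSimple A).Reachable u ⟨rep n A u.val, rep_lt n A u⟩ :=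
        ih u (by show v.val - 1 ≤ k; omega)
      have he : (⟨rep n A u.val, rep_lt n A u⟩ : Fin (2 ^ n))
           = ⟨rep n A v.val, rep_lt n A v⟩ := Fin.ext hrepeq
      rw [he] at hreach
      exact hadj.symm.reachable.trans hreach

lemma reachable_rep (A : Finset (E n)) (v : Fin (2 ^ n)) :
    ((grig n).toSimple A).Reachable v ⟨rep n A v.val, rep_lt n A v⟩ :=
  reachable_rep_aux n A v.val v le_rfl

lemma rep_eq_of_reachable {A : Finset (E n)} {u v : Fin (2 ^ n)}
    (h : ((grig n).toSimple A).Reachable u v) : rep n A u.val = rep n A v.val := by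
  obtain ⟨w⟩ := h
  induction w with
  | nil => rfl
  | cons h p ih => exact (rep_eq_of_adj n h).trans ih

open Classical in
lemma comps_eq (A : Finset (E n)) : (grig n).comps A = 2 ^ n - (S n A).card := by
  classical
  unfold Multigraph.comps
  set G := (grig n).toSimple A with hG
  let f : Fin (2 ^ n) → {m : Fin (2 ^ n) // P n A m.val} :=
    fun v => ⟨⟨rep n A v.val, rep_lt n A v⟩, P_rep n A v.val⟩
  have hf : ∀ (v w : Fin (2 ^ n)) (p : G.Walk v w), p.IsPath → f v = f w := by
    intro v w p _
    exact Subtype.ext (Fin.ext (rep_eq_of_reachable n ⟨p⟩))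
  let e : G.ConnectedComponent ≃ {m : Fin (2 ^ n) // P n A m.val} :=
    { toFun := SimpleGraph.ConnectedComponent.lift f hf
      invFun := fun m => G.connectedComponentMk m.1
      left_inv := by
        intro c
        induction c using SimpleGraph.ConnectedComponent.ind with
        | _ v =>
          exact SimpleGraph.ConnectedComponent.sound (reachable_rep n A v).symm
      right_inv := by
        rintro ⟨m, hm⟩
        exact Subtype.ext (Fin.ext (rep_eq_self_of_P n hm)) }
  rw [Nat.card_congr e, Nat.card_eq_fintype_card]
  -- count the subtype
  let g : {i : Gap n // i ∈ S n A} → {m : Fin (2 ^ n) // ¬ P n A m.val} :=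
    fun i => ⟨⟨i.1.val + 1, by have := i.1.isLt; omega⟩, by
      show ¬ P n A (i.1.val + 1)
      simp only [P]
      push_neg
      refine ⟨by omega, ?_⟩
      simp only [Nat.add_sub_cancel]
      exact ⟨i.1.isLt, by simpa using i.2⟩⟩
  have hgbij : Function.Bijective g := by
    constructor
    · rintro ⟨i, hi⟩ ⟨j, hj⟩ hij
      have h2 : (i.val : ℕ) + 1 = j.val + 1 := by
        have h3 := congrArg (fun x => ((x : Fin (2 ^ n)).val : ℕ)) (congrArg Subtype.val hij)
        simpa [g] using h3
      exact Subtype.ext (show i = j from Fin.ext (by omega))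
    · rintro ⟨m, hm⟩
      simp only [P] at hm
      push_neg at hm
      obtain ⟨hm0, hcov⟩ := hm
      obtain ⟨hk, hmem⟩ := hcov
      refine ⟨⟨⟨m.val - 1, hk⟩, hmem⟩, ?_⟩
      exact Subtype.ext (Fin.ext (show m.val - 1 + 1 = m.val by omega))
  have hcard1 : Fintype.card {m : Fin (2 ^ n) // ¬ P n A m.val} = (S n A).card := by
    rw [← Fintype.card_of_bijective hgbij, Fintype.card_coe]
  have hcard2 := Fintype.card_subtype_compl (fun m : Fin (2 ^ n) => P n A m.val)
  have hle := Fintype.card_subtype_le (fun m : Fin (2 ^ n) => P n A m.val)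
  rw [hcard1] at hcard2
  simp only [Fintype.card_fin] at hcard2 hle ⊢
  omega

lemma card_eq_of_good (A : Finset (E n))
    (h1 : ∀ e ∈ A, ∃ (i : Gap n) (m : Fin (mult n i)), e = Sum.inl ⟨i, m⟩)
    (h2 : ∀ (i : Gap n) (m m' : Fin (mult n i)),
      (Sum.inl ⟨i, m⟩ : E n) ∈ A → (Sum.inl ⟨i, m'⟩ : E n) ∈ A → m = m') :
    A.card = (S n A).card := by
  classical
  symm
  apply Finset.card_bij (fun j hj => (Sum.inl ⟨j, ((mem_S n).mp hj).choose⟩ : E n))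
  · intro j hj
    exact ((mem_S n).mp hj).choose_spec
  · intro j1 hj1 j2 hj2 heq
    exact (Sigma.mk.inj_iff.mp (Sum.inl.inj heq)).1
  · intro e he
    obtain ⟨i, m, rfl⟩ := h1 e he
    have hi : i ∈ S n A := (mem_S n).mpr ⟨m, he⟩
    refine ⟨i, hi, ?_⟩
    have := h2 i (((mem_S n).mp hi).choose) m (((mem_S n).mp hi).choose_spec) he
    rw [this]

open Classical in
noncomputable def toA (f : ∀ i : Gap n, Option (Fin (mult n i))) : Finset (E n) :=
  Finset.univ.filter fun e =>
    match e with
    | Sum.inl ⟨i, m⟩ => f i = some m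
    | Sum.inr _ => False

lemma mem_toA_inl {f : ∀ i : Gap n, Option (Fin (mult n i))} {i : Gap n} {m : Fin (mult n i)} :
    (Sum.inl ⟨i, m⟩ : E n) ∈ toA n f ↔ f i = some m := by
  simp [toA]

lemma not_mem_toA_inr {f : ∀ i : Gap n, Option (Fin (mult n i))} {x : Fin (2 ^ n) ⊕ Fin 4} :
    (Sum.inr x : E n) ∉ toA n f := by
  simp [toA]

lemma good_toA (f : ∀ i : Gap n, Option (Fin (mult n i))) :
    (toA n f).card = (S n (toA n f)).card := by
  apply card_eq_of_good
  · rintro (⟨i, m⟩ | x) he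
    · exact ⟨i, m, rfl⟩
    · exact absurd he (not_mem_toA_inr n)
  · intro i m m' hm hm'
    rw [mem_toA_inl] at hm hm'
    rw [hm] at hm'
    exact Option.some.inj hm'

lemma toA_injective : Function.Injective (toA n) := by
  intro f g hfg
  funext i
  have key : ∀ m : Fin (mult n i), f i = some m ↔ g i = some m := by
    intro m
    rw [← mem_toA_inl (n := n), ← mem_toA_inl (n := n), hfg]
  cases hf : f i with
  | none =>
    cases hg : g i with
    | none => rfl
    | some m => exact absurd ((key m).mpr hg) (by rw [hf]; simp)
  | some m => exact ((key m).mp hf).symm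

open Classical in
noncomputable def pick (A : Finset (E n)) (i : Gap n) : Fin (mult n i) :=
  if h : i ∈ S n A then ((mem_S n).mp h).choose else ⟨0, mult_pos n i⟩

lemma pick_mem {A : Finset (E n)} {i : Gap n} (h : i ∈ S n A) :
    (Sum.inl ⟨i, pick n A i⟩ : E n) ∈ A := by
  simp only [pick]
  rw [dif_pos h]
  exact ((mem_S n).mp h).choose_spec

lemma toA_surjective (A : Finset (E n)) (hA : A.card = (S n A).card) :
    ∃ f, toA n f = A := by
  classical
  have hψinj : Set.InjOn (fun i => (Sum.inl ⟨i, pick n A i⟩ : E n)) (S n A) := by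
    intro i _ j _ hij
    exact (Sigma.mk.inj_iff.mp (Sum.inl.inj hij)).1
  have hsub : (S n A).image (fun i => (Sum.inl ⟨i, pick n A i⟩ : E n)) ⊆ A := by
    intro e he
    obtain ⟨i, hi, rfl⟩ := Finset.mem_image.mp he
    exact pick_mem n hi
  have hcardim : ((S n A).image (fun i => (Sum.inl ⟨i, pick n A i⟩ : E n))).card
      = (S n A).card := Finset.card_image_of_injOn hψinj
  have hAeq : A = (S n A).image (fun i => (Sum.inl ⟨i, pick n A i⟩ : E n)) :=
    (Finset.eq_of_subset_of_card_le hsub (by omega)).symm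
  refine ⟨fun i => if i ∈ S n A then some (pick n A i) else none, ?_⟩
  ext e
  constructor
  · intro he
    rcases e with ⟨i, m⟩ | x
    · rw [mem_toA_inl] at he
      by_cases hi : i ∈ S n A
      · rw [if_pos hi] at he
        cases Option.some.inj he
        exact pick_mem n hi
      · rw [if_neg hi] at he
        exact absurd he (by simp)
    · exact absurd he (not_mem_toA_inr n)
  · intro he
    have he' := he
    rw [hAeq] at he'
    obtain ⟨i, hi, rfl⟩ := Finset.mem_image.mp he'
    rw [mem_toA_inl, if_pos hi]

lemma Scard_le (A : Finset (E n)) : (S n A).card ≤ 2 ^ n - 1 := by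
  have := Finset.card_le_univ (S n A)
  simpa using this

lemma forest_iff (A : Finset (E n)) :
    A.card + (grig n).comps A = Fintype.card (Fin (2 ^ n)) ↔ A.card = (S n A).card := by
  rw [comps_eq, Fintype.card_fin]
  have h1 := Scard_le n A
  have h2 : 1 ≤ 2 ^ n := Nat.one_le_two_pow
  omega

lemma even_odd_range (m : ℕ) :
    ((Finset.range m).filter fun k => Even k).card = (m + 1) / 2 ∧
    ((Finset.range m).filter fun k => ¬ Even k).card = m / 2 := by
  induction m with
  | zero => simp
  | succ m ih =>
    rw [Finset.range_add_one, Finset.filter_insert, Finset.filter_insert]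
    have hnm : m ∉ Finset.range m := by simp
    by_cases h : Even m
    · obtain ⟨t, ht⟩ := h
      rw [if_pos ⟨t, ht⟩, if_neg (by simp; exact ⟨t, ht⟩)]
      rw [Finset.card_insert_of_notMem (fun hc => hnm (Finset.mem_filter.mp hc).1)]
      constructor
      · rw [ih.1]; omega
      · rw [ih.2]; omega
    · rw [if_neg h, if_pos h]
      rw [Finset.card_insert_of_notMem (fun hc => hnm (Finset.mem_filter.mp hc).1)]
      have hodd : Odd m := Nat.odd_iff.mpr (Nat.not_even_iff.mp h)
      obtain ⟨t, ht⟩ := hodd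
      constructor
      · rw [ih.1]; omega
      · rw [ih.2]; omega

lemma card_even_fin (m : ℕ) :
    ((Finset.univ : Finset (Fin m)).filter fun i => Even i.val).card = (m + 1) / 2 := by
  classical
  rw [Finset.card_filter, Fin.sum_univ_eq_sum_range (fun k => if Even k then 1 else 0) m,
    ← Finset.card_filter]
  exact (even_odd_range m).1

lemma card_odd_fin (m : ℕ) :
    ((Finset.univ : Finset (Fin m)).filter fun i => ¬ Even i.val).card = m / 2 := by
  classical
  rw [Finset.card_filter, Fin.sum_univ_eq_sum_range (fun k => if ¬ Even k then 1 else 0) m,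
    ← Finset.card_filter]
  exact (even_odd_range m).2

end GrigAux

/-- For each `n ≥ 1`, the number of spanning forests of the
Schreier graph `Γ_n` of the Grigorchuk group is `2^(2^(n-1)) · 3^(2^(n-1) - 1)`. -/
theorem forestCount_grig (n : ℕ) (hn : 1 ≤ n) :
    (grig n).forestCount = 2 ^ (2 ^ (n - 1)) * 3 ^ (2 ^ (n - 1) - 1) := by
  classical
  rw [Multigraph.forestCount]
  have key : Nat.card {A : Finset (grig n).Edge //
      A.card + (grig n).comps A = Fintype.card (Fin (2 ^ n))} =
      Nat.card (∀ i : GrigAux.Gap n, Option (Fin (GrigAux.mult n i))) := by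
    symm
    apply Nat.card_eq_of_bijective
      (f := fun f => ⟨GrigAux.toA n f, (GrigAux.forest_iff n _).mpr (GrigAux.good_toA n f)⟩)
    constructor
    · intro f g hfg
      exact GrigAux.toA_injective n (congrArg Subtype.val hfg)
    · rintro ⟨A, hA⟩
      obtain ⟨f, hf⟩ := GrigAux.toA_surjective n A ((GrigAux.forest_iff n A).mp hA)
      exact ⟨f, Subtype.ext hf⟩
  rw [key, Nat.card_eq_fintype_card, Fintype.card_pi]
  have hcongr : ∀ i ∈ (Finset.univ : Finset (GrigAux.Gap n)),
      Fintype.card (Option (Fin (GrigAux.mult n i))) = if Even i.val then 2 else 3 := by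
    intro i _
    rw [Fintype.card_option, Fintype.card_fin, GrigAux.mult]
    split <;> rfl
  rw [Finset.prod_congr rfl hcongr, Finset.prod_ite, Finset.prod_const, Finset.prod_const,
    GrigAux.card_even_fin, GrigAux.card_odd_fin]
  have h1 : 1 ≤ 2 ^ (n - 1) := Nat.one_le_two_pow
  have h2 : 2 ^ n = 2 * 2 ^ (n - 1) := by
    conv_lhs => rw [show n = (n - 1) + 1 by omega]
    ring
  have e1 : (2 ^ n - 1 + 1) / 2 = 2 ^ (n - 1) := by omega
  have e2 : (2 ^ n - 1) / 2 = 2 ^ (n - 1) - 1 := by omega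
  rw [e1, e2]
end

section
/- For each n ≥ 1 and all real β, J with βJ ≠ 0, one has 2(e^{2βJ} − 1)^{2^n − 1} · e^{−βJ(3·2^{n−1} − 2)} · T_n*((e^{2βJ}+1)/(e^{2βJ}−1), e^{2βJ}) = 2^{2^n} cosh(βJ)^{3·2^{n−1} − 2} (1 + tanh^2(βJ))^{2^{n−1} − 1}, where T_n*(x,y) = x^{2^{n−1}} (y+x)^{2^{n−1}−1} is the Tutte polynomial of the loopless Schreier graph Γ_n* of the Grigorchuk group; the right-hand side is the partition function Z_n of the Ising model on Γ_n*. -/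
/-- The loopless level-`n` Schreier graph `Γ_n*` of the Grigorchuk group: `Γ_n`
with all loops deleted, i.e. the path-shaped cactus on `2^n` vertices alternating
`2^(n-1)` bridges and `2^(n-1) - 1` cycles of length two. -/
def grigStar (n : ℕ) : Multigraph (Fin (2 ^ n)) where
  Edge := Σ i : Fin (2 ^ n - 1), Fin (if Even i.val then 1 else 2)
  fintypeEdge := inferInstance
  decEqEdge := inferInstance
  inc := fun e => s(leftV n e.1, rightV n e.1)


def gcount (S : Finset ℕ) (j : ℕ) : ℕ := ((Finset.range j).filter (· ∉ S)).card

lemma gcount_succ (S : Finset ℕ) (j : ℕ) :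
    gcount S (j + 1) = if j ∈ S then gcount S j else gcount S j + 1 := by
  unfold gcount
  rw [Finset.range_add_one, Finset.filter_insert]
  by_cases h : j ∈ S
  · rw [if_pos h, if_neg (not_not.2 h)]
  · rw [if_neg h, if_pos h, Finset.card_insert_of_notMem (by simp)]

lemma gcount_mono (S : Finset ℕ) {j k : ℕ} (h : j ≤ k) : gcount S j ≤ gcount S k :=
  Finset.card_le_card (Finset.filter_subset_filter _ (Finset.range_subset_range.2 h))

lemma gcount_succ_le (S : Finset ℕ) (j : ℕ) : gcount S (j + 1) ≤ gcount S j + 1 := by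
  rw [gcount_succ]; split_ifs <;> omega

lemma gcount_mem_of_eq (S : Finset ℕ) {j : ℕ} (h : gcount S (j + 1) = gcount S j) : j ∈ S := by
  by_contra hj
  rw [gcount_succ, if_neg hj] at h
  omega

lemma gcount_ivt (S : Finset ℕ) : ∀ t m, m ≤ gcount S t → ∃ j, j ≤ t ∧ gcount S j = m := by
  intro t
  induction t with
  | zero =>
    intro m hm
    have h0 : gcount S 0 = 0 := by simp [gcount]
    exact ⟨0, le_rfl, by omega⟩
  | succ t ih =>
    intro m hm
    by_cases h : m ≤ gcount S t
    · obtain ⟨j, hj, hje⟩ := ih m h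
      exact ⟨j, hj.trans (Nat.le_succ t), hje⟩
    · have := gcount_succ_le S t
      exact ⟨t + 1, le_rfl, by omega⟩

lemma gcount_top (S : Finset ℕ) {M : ℕ} (h : S ⊆ Finset.range M) : gcount S M = M - S.card := by
  unfold gcount
  rw [Finset.filter_not, Finset.card_sdiff_of_subset (Finset.filter_subset _ _), Finset.card_range,
    Finset.filter_mem_eq_inter, Finset.inter_eq_right.2 h]

lemma gcount_lt (S : Finset ℕ) {M j : ℕ} (h : S ⊆ Finset.range M) (hj : j ≤ M) :
    gcount S j ≤ M - S.card := by
  rw [← gcount_top S h]; exact gcount_mono S hj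

lemma countEven (m : ℕ) : ((Finset.range m).filter (fun j => Even j)).card = (m + 1) / 2 := by
  induction m with
  | zero => simp
  | succ m ih =>
    rw [Finset.range_add_one, Finset.filter_insert]
    by_cases h : Even m
    · rw [if_pos h, Finset.card_insert_of_notMem (by simp)]
      rw [Nat.even_iff] at h; omega
    · rw [if_neg h]
      rw [Nat.even_iff] at h; omega

open Finset

section Comps

variable (n : ℕ) (A : Finset (grigStar n).Edge)

/-- present gaps -/
def gapsOf : Finset (Fin (2 ^ n - 1)) := A.image Sigma.fst

/-- present gaps, as naturals -/
def gapsN : Finset ℕ := (gapsOf n A).image Fin.val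

lemma gapsN_card : (gapsN n A).card = (gapsOf n A).card :=
  Finset.card_image_of_injective _ Fin.val_injective

lemma gapsN_subset : gapsN n A ⊆ Finset.range (2 ^ n - 1) := by
  intro j hj
  simp only [gapsN, Finset.mem_image] at hj
  obtain ⟨i, _, rfl⟩ := hj
  exact Finset.mem_range.2 i.isLt

lemma gapsOf_card_le : (gapsOf n A).card ≤ 2 ^ n - 1 := by
  have := Finset.card_le_card (Finset.subset_univ (gapsOf n A))
  simpa using this

lemma adj_gcount {u v : Fin (2 ^ n)} (h : ((grigStar n).toSimple A).Adj u v) :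
    gcount (gapsN n A) u.val = gcount (gapsN n A) v.val := by
  rw [Multigraph.toSimple, SimpleGraph.fromRel_adj] at h
  obtain ⟨hne, h | h⟩ := h <;>
  · obtain ⟨e, heA, hinc⟩ := h
    have hmem : e.1.val ∈ gapsN n A := by
      simp only [gapsN, gapsOf, Finset.mem_image]
      exact ⟨e.1, Finset.mem_image.2 ⟨e, heA, rfl⟩, rfl⟩
    have key : gcount (gapsN n A) e.1.val = gcount (gapsN n A) (e.1.val + 1) := by
      rw [gcount_succ, if_pos hmem]
    simp only [grigStar, Sym2.eq, Sym2.rel_iff', Prod.mk.injEq, Prod.swap_prod_mk] at hinc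
    rcases hinc with ⟨h1, h2⟩ | ⟨h1, h2⟩ <;>
      · rw [← h1, ← h2]
        simp only [leftV, rightV]
        first
          | exact key
          | exact key.symm

lemma walk_gcount {u v : Fin (2 ^ n)} (p : ((grigStar n).toSimple A).Walk u v) :
    gcount (gapsN n A) u.val = gcount (gapsN n A) v.val := by
  induction p with
  | nil => rfl
  | cons h _ ih => exact (adj_gcount n A h).trans ih

lemma reach_of_gcount : ∀ (d : ℕ) (u v : Fin (2 ^ n)), v.val = u.val + d →
    gcount (gapsN n A) u.val = gcount (gapsN n A) v.val →
    ((grigStar n).toSimple A).Reachable u v := by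
  intro d
  induction d with
  | zero =>
    intro u v hv _
    have : u = v := Fin.ext (by omega)
    exact this ▸ SimpleGraph.Reachable.refl u
  | succ d ih =>
    intro u v hv hg
    have hwlt : u.val + d < 2 ^ n := by have := v.isLt; omega
    set w : Fin (2 ^ n) := ⟨u.val + d, hwlt⟩ with hw
    have h1 : gcount (gapsN n A) u.val ≤ gcount (gapsN n A) w.val := gcount_mono _ (by simp [hw])
    have h2 : gcount (gapsN n A) w.val ≤ gcount (gapsN n A) v.val := gcount_mono _ (by simp [hw]; omega)
    have hgw : gcount (gapsN n A) u.val = gcount (gapsN n A) w.val := by omega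
    have hwv : gcount (gapsN n A) (w.val + 1) = gcount (gapsN n A) w.val := by
      have : w.val + 1 = v.val := by simp [hw]; omega
      rw [this]; omega
    have hmem : w.val ∈ gapsN n A := gcount_mem_of_eq _ hwv
    -- extract an edge over gap w.val
    have : ∃ e ∈ A, (e : (grigStar n).Edge).1.val = w.val := by
      simp only [gapsN, gapsOf, Finset.mem_image] at hmem
      obtain ⟨i, hi, hival⟩ := hmem
      obtain ⟨e, he, rfl⟩ := Finset.mem_image.1 hi
      exact ⟨e, he, hival⟩
    obtain ⟨e, heA, heval⟩ := this
    have hadj : ((grigStar n).toSimple A).Adj w v := by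
      rw [Multigraph.toSimple, SimpleGraph.fromRel_adj]
      refine ⟨fun hc => by simp [hw, Fin.ext_iff] at hc; omega, Or.inl ⟨e, heA, ?_⟩⟩
      show s(leftV n e.1, rightV n e.1) = s(w, v)
      have hl : leftV n e.1 = w := Fin.ext (by simp [leftV, heval, hw])
      have hr : rightV n e.1 = v := Fin.ext (by simp [rightV, heval, hw]; omega)
      rw [hl, hr]
    exact (ih u w rfl hgw).trans hadj.reachable

lemma comps_eq : (grigStar n).comps A = 2 ^ n - (gapsOf n A).card := by
  classical
  have hN : 1 ≤ 2 ^ n := Nat.one_le_two_pow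
  set S := gapsN n A with hS
  set M := 2 ^ n - 1 with hM
  have hsub : S ⊆ Finset.range M := gapsN_subset n A
  have hcard : S.card ≤ M := by
    rw [gapsN_card]; exact gapsOf_card_le n A
  set k := 2 ^ n - (gapsOf n A).card with hk
  have hSk : 2 ^ n - S.card = k := by rw [gapsN_card]
  have hk1 : 1 ≤ k := by
    have := gapsOf_card_le n A
    omega
  have hlt : ∀ v : Fin (2 ^ n), gcount S v.val < k := by
    intro v
    have := gcount_lt S hsub (show v.val ≤ M by have := v.isLt; omega)
    omega
  set F : ((grigStar n).toSimple A).ConnectedComponent → Fin k :=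
    SimpleGraph.ConnectedComponent.lift (fun v => ⟨gcount S v.val, hlt v⟩)
      (fun v w p _ => by ext; exact walk_gcount n A p) with hF
  have hinj : Function.Injective F := by
    intro c d
    refine SimpleGraph.ConnectedComponent.ind₂ (fun u v huv => ?_) c d
    have hg : gcount S u.val = gcount S v.val := by
      simpa [hF, Fin.ext_iff] using huv
    rcases le_total u.val v.val with hle | hle
    · exact SimpleGraph.ConnectedComponent.sound (reach_of_gcount n A (v.val - u.val) u v (by omega) hg)
    · exact (SimpleGraph.ConnectedComponent.sound (reach_of_gcount n A (u.val - v.val) v u (by omega) hg.symm)).symm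
  have hsurj : Function.Surjective F := by
    intro m
    have hmle : m.val ≤ gcount S M := by
      rw [gcount_top S hsub]
      have := m.isLt
      omega
    obtain ⟨j, hjM, hje⟩ := gcount_ivt S M m.val hmle
    refine ⟨((grigStar n).toSimple A).connectedComponentMk ⟨j, by omega⟩, ?_⟩
    simp only [hF, SimpleGraph.ConnectedComponent.lift_mk]
    exact Fin.ext hje
  have : (grigStar n).comps A = Nat.card (Fin k) :=
    Nat.card_congr (Equiv.ofBijective F ⟨hinj, hsurj⟩)
  rw [this, Nat.card_eq_fintype_card, Fintype.card_fin, hk]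

lemma rk_eq (hn : 1 ≤ n) : (grigStar n).rk A = (gapsOf n A).card := by
  rw [Multigraph.rk, comps_eq]
  have := gapsOf_card_le n A
  have hN : 2 ≤ 2 ^ n := by
    calc 2 = 2 ^ 1 := rfl
    _ ≤ 2 ^ n := Nat.pow_le_pow_right (by norm_num) hn
  simp only [Fintype.card_fin]
  omega

end Comps

section TutteCalc

variable {x y : ℝ}

/-- Finsets of a sigma type correspond to tuples of finsets of the fibers. -/
def sigmaFinsetEquiv {ι : Type*} [Fintype ι] [DecidableEq ι] {γ : ι → Type*}
    [∀ i, Fintype (γ i)] [∀ i, DecidableEq (γ i)] :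
    ((i : ι) → Finset (γ i)) ≃ Finset ((i : ι) × γ i) where
  toFun f := Finset.univ.sigma f
  invFun A i := Finset.univ.filter (fun j => ⟨i, j⟩ ∈ A)
  left_inv f := by funext i; ext j; simp [Finset.mem_sigma]
  right_inv A := by ext ⟨i, j⟩; simp [Finset.mem_sigma]

lemma gapsOf_univ (n : ℕ) : gapsOf n (Finset.univ) = Finset.univ := by
  ext i
  refine ⟨fun _ => Finset.mem_univ _, fun _ => Finset.mem_image.2 ?_⟩
  exact ⟨⟨i, ⟨0, by by_cases h : Even i.val <;> simp [h]⟩⟩, Finset.mem_univ _, rfl⟩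

lemma gapsOf_sigma (n : ℕ) (f : (i : Fin (2 ^ n - 1)) → Finset (Fin (if Even i.val then 1 else 2))) :
    gapsOf n (Finset.univ.sigma f) = Finset.univ.filter (fun i => (f i).Nonempty) := by
  ext i
  simp only [gapsOf, Finset.mem_image, Finset.mem_sigma, Finset.mem_filter, Finset.mem_univ,
    true_and]
  constructor
  · rintro ⟨⟨i', j⟩, hij, rfl⟩
    exact ⟨j, by simpa using hij⟩
  · rintro ⟨j, hj⟩
    exact ⟨⟨i, j⟩, by simpa using hj, rfl⟩

lemma sumFinAux (m : ℕ) (x y : ℝ) (hm : m = 1 ∨ m = 2) :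
    ∑ B : Finset (Fin m), (x - 1) ^ (1 - (if B.Nonempty then 1 else 0)) *
      (y - 1) ^ (B.card - (if B.Nonempty then 1 else 0)) = if m = 1 then x else x + y := by
  rcases hm with rfl | rfl
  · have hu : (Finset.univ : Finset (Finset (Fin 1))) = {∅, {0}} := by decide
    rw [hu, Finset.sum_insert (by decide), Finset.sum_singleton]
    norm_num
  · have hu : (Finset.univ : Finset (Finset (Fin 2))) = {∅, {0}, {1}, {0, 1}} := by decide
    rw [hu, Finset.sum_insert (by decide), Finset.sum_insert (by decide),
      Finset.sum_insert (by decide), Finset.sum_singleton]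
    norm_num [Finset.card_insert_of_notMem]
    ring

lemma tutte_grigStar (n : ℕ) (hn : 1 ≤ n) (x y : ℝ) :
    (grigStar n).tutte x y = x ^ 2 ^ (n - 1) * (x + y) ^ (2 ^ (n - 1) - 1) := by
  classical
  have h2 : 2 ^ n = 2 * 2 ^ (n - 1) := by
    conv_lhs => rw [show n = (n - 1) + 1 by omega]
    ring
  have h2n : 1 ≤ 2 ^ (n - 1) := Nat.one_le_two_pow
  have hrkU : (grigStar n).rk Finset.univ = 2 ^ n - 1 := by
    rw [rk_eq n _ hn, gapsOf_univ]
    simp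
  rw [Multigraph.tutte, Finset.powerset_univ]
  have hterm : ∀ A : Finset (grigStar n).Edge,
      (x - 1) ^ ((grigStar n).rk Finset.univ - (grigStar n).rk A) *
        (y - 1) ^ ((grigStar n).nullity A)
      = (x - 1) ^ ((2 ^ n - 1) - (gapsOf n A).card) *
        (y - 1) ^ (A.card - (gapsOf n A).card) := by
    intro A
    rw [hrkU, Multigraph.nullity, rk_eq n A hn]
  rw [Finset.sum_congr rfl fun A _ => hterm A]
  have htrans :
      ∑ A : Finset (grigStar n).Edge,
        (x - 1) ^ ((2 ^ n - 1) - (gapsOf n A).card) * (y - 1) ^ (A.card - (gapsOf n A).card)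
      = ∑ f : (i : Fin (2 ^ n - 1)) → Finset (Fin (if Even i.val then 1 else 2)),
          (x - 1) ^ ((2 ^ n - 1) - (gapsOf n (Finset.univ.sigma f)).card) *
            (y - 1) ^ ((Finset.univ.sigma f).card - (gapsOf n (Finset.univ.sigma f)).card) :=
    (Fintype.sum_equiv sigmaFinsetEquiv _ _ (fun f => rfl)).symm
  rw [htrans]
  have hkey : ∀ f : (i : Fin (2 ^ n - 1)) → Finset (Fin (if Even i.val then 1 else 2)),
      (x - 1) ^ ((2 ^ n - 1) - (gapsOf n (Finset.univ.sigma f)).card) *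
        (y - 1) ^ ((Finset.univ.sigma f).card - (gapsOf n (Finset.univ.sigma f)).card)
      = ∏ i : Fin (2 ^ n - 1), ((x - 1) ^ (1 - (if (f i).Nonempty then 1 else 0)) *
          (y - 1) ^ ((f i).card - (if (f i).Nonempty then 1 else 0))) := by
    intro f
    have hc : (gapsOf n (Finset.univ.sigma f)).card
        = ∑ i : Fin (2 ^ n - 1), (if (f i).Nonempty then 1 else 0) := by
      rw [gapsOf_sigma, Finset.card_filter]
    have ha : (Finset.univ.sigma f).card = ∑ i : Fin (2 ^ n - 1), (f i).card :=
      Finset.card_sigma _ _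
    have hM : 2 ^ n - 1 = ∑ _i : Fin (2 ^ n - 1), 1 := by simp
    rw [hc, ha, Finset.prod_mul_distrib, Finset.prod_pow_eq_pow_sum,
      Finset.prod_pow_eq_pow_sum]
    congr 1
    · congr 1
      rw [Finset.sum_tsub_distrib _ (fun i _ => by by_cases h : (f i).Nonempty <;> simp [h]), ← hM]
    · congr 1
      rw [Finset.sum_tsub_distrib _ (fun i _ => ?_)]
      by_cases h : (f i).Nonempty
      · simpa [h] using Finset.card_pos.2 h
      · simp [h]
  rw [Finset.sum_congr rfl fun f _ => hkey f, ← Fintype.piFinset_univ]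
  have hps := Finset.prod_univ_sum
      (fun i : Fin (2 ^ n - 1) => (Finset.univ : Finset (Finset (Fin (if Even i.val then 1 else 2)))))
      (fun i B => (x - 1) ^ (1 - if B.Nonempty then 1 else 0) *
        (y - 1) ^ (B.card - if B.Nonempty then 1 else 0))
  rw [← hps]
  have hin : ∀ i : Fin (2 ^ n - 1),
      (∑ B : Finset (Fin (if Even i.val then 1 else 2)),
        ((x - 1) ^ (1 - (if B.Nonempty then 1 else 0)) *
          (y - 1) ^ (B.card - (if B.Nonempty then 1 else 0))))
      = if Even i.val then x else x + y := by
    intro i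
    rw [sumFinAux _ x y (by split <;> simp)]
    by_cases h : Even i.val <;> simp [h]
  rw [Finset.prod_congr rfl fun i _ => hin i, Finset.prod_ite (fun _ => x) (fun _ => x + y),
    Finset.prod_const, Finset.prod_const]
  have hcEven : (Finset.univ.filter (fun i : Fin (2 ^ n - 1) => Even i.val)).card
      = 2 ^ (n - 1) := by
    rw [Finset.card_filter, Fin.sum_univ_eq_sum_range (fun j => if Even j then (1 : ℕ) else 0),
      ← Finset.card_filter, countEven]
    omega
  have hcOdd : (Finset.univ.filter (fun i : Fin (2 ^ n - 1) => ¬ Even i.val)).card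
      = 2 ^ (n - 1) - 1 := by
    have := Finset.card_filter_add_card_filter_not
      (s := (Finset.univ : Finset (Fin (2 ^ n - 1)))) (p := fun i => Even i.val)
    simp only [Finset.card_univ, Fintype.card_fin] at this
    omega
  rw [hcEven, hcOdd]

end TutteCalc

section Algebra

private lemma pow_group1 (a b c d : ℝ) (k : ℕ) :
    2 * a ^ (2 * k + 1) * b ^ (3 * k + 1) * (c ^ (k + 1) * d ^ k)
      = (2 * a * b * c) * (a ^ 2 * b ^ 3 * (c * d)) ^ k := by ring

private lemma pow_group2 (C D : ℝ) (k : ℕ) :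
    (4 * C) * (4 * C ^ 3 * D) ^ k = 2 ^ (2 * k + 2) * C ^ (3 * k + 1) * D ^ k := by
  have h4 : ((4 : ℝ)) ^ k = (2 : ℝ) ^ (2 * k) := by
    rw [show (4 : ℝ) = 2 ^ 2 by norm_num, ← pow_mul]
  rw [mul_pow, mul_pow, h4]
  ring

lemma ising_algebra (t : ℝ) (ht : t ≠ 0) (k : ℕ) :
    2 * (Real.exp (2 * t) - 1) ^ (2 * k + 1) * Real.exp (-t * (3 * (k : ℝ) + 1)) *
      (((Real.exp (2 * t) + 1) / (Real.exp (2 * t) - 1)) ^ (k + 1) *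
        ((Real.exp (2 * t) + 1) / (Real.exp (2 * t) - 1) + Real.exp (2 * t)) ^ k) =
    2 ^ (2 * k + 2) * Real.cosh t ^ (3 * k + 1) * (1 + Real.tanh t ^ 2) ^ k := by
  have hE : Real.exp (2 * t) - 1 ≠ 0 := by
    refine sub_ne_zero.2 ?_
    rw [Ne, Real.exp_eq_one_iff]
    intro hc; exact ht (by linarith)
  have hu : Real.exp (2 * t) = Real.exp t ^ 2 := by rw [two_mul, Real.exp_add, sq]
  have hc0 : Real.cosh t ≠ 0 := (Real.cosh_pos t).ne'
  have hexp : Real.exp (-t * (3 * (k : ℝ) + 1)) = Real.exp (-t) ^ (3 * k + 1) := by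
    rw [← Real.exp_nat_mul]
    congr 1
    push_cast
    ring
  have hE' : Real.exp t ^ 2 - 1 ≠ 0 := by rwa [hu] at hE
  set a := Real.exp (2 * t) - 1 with ha
  set b := Real.exp (-t) with hb
  set c := (Real.exp (2 * t) + 1) / (Real.exp (2 * t) - 1) with hcx
  set d := (Real.exp (2 * t) + 1) / (Real.exp (2 * t) - 1) + Real.exp (2 * t) with hd
  have hI : 2 * a * b * c = 4 * Real.cosh t := by
    rw [ha, hb, hcx, Real.cosh_eq, Real.exp_neg, hu]
    field_simp
    ring
  have hII : a ^ 2 * b ^ 3 * (c * d) = 4 * Real.cosh t ^ 3 * (1 + Real.tanh t ^ 2) := by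
    rw [Real.tanh_eq_sinh_div_cosh, ha, hb, hcx, hd, Real.cosh_eq, Real.sinh_eq,
      Real.exp_neg, hu]
    have h0 : Real.exp t ≠ 0 := Real.exp_ne_zero t
    field_simp
    ring
  calc 2 * a ^ (2 * k + 1) * Real.exp (-t * (3 * (k : ℝ) + 1)) * (c ^ (k + 1) * d ^ k)
      = (2 * a * b * c) * (a ^ 2 * b ^ 3 * (c * d)) ^ k := by rw [hexp, pow_group1]
    _ = (4 * Real.cosh t) * (4 * Real.cosh t ^ 3 * (1 + Real.tanh t ^ 2)) ^ k := by
        rw [hI, hII]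
    _ = 2 ^ (2 * k + 2) * Real.cosh t ^ (3 * k + 1) * (1 + Real.tanh t ^ 2) ^ k :=
        pow_group2 _ _ k

end Algebra

/-- For each `n ≥ 1` and all real `β`, `J` with `βJ ≠ 0`,
`2(e^{2βJ} - 1)^(2^n - 1) · e^{-βJ(3·2^(n-1) - 2)} ·
  T_n*((e^{2βJ}+1)/(e^{2βJ}-1), e^{2βJ})
  = 2^(2^n) cosh(βJ)^(3·2^(n-1) - 2) (1 + tanh²(βJ))^(2^(n-1) - 1)`,
where `T_n*` is the Tutte polynomial of the loopless Schreier graph `Γ_n*` of the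
Grigorchuk group and the right-hand side is the partition function `Z_n` of the
Ising model on `Γ_n*`. -/
theorem ising_grigStar (n : ℕ) (hn : 1 ≤ n) (β J : ℝ) (h : β * J ≠ 0) :
    2 * (Real.exp (2 * β * J) - 1) ^ (2 ^ n - 1) *
        Real.exp (-(β * J) * (3 * 2 ^ (n - 1) - 2 : ℝ)) *
        (grigStar n).tutte
          ((Real.exp (2 * β * J) + 1) / (Real.exp (2 * β * J) - 1))
          (Real.exp (2 * β * J)) =
      2 ^ (2 ^ n) * Real.cosh (β * J) ^ (3 * 2 ^ (n - 1) - 2) *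
        (1 + Real.tanh (β * J) ^ 2) ^ (2 ^ (n - 1) - 1) := by
  obtain ⟨k, hk⟩ : ∃ k, 2 ^ (n - 1) = k + 1 :=
    ⟨2 ^ (n - 1) - 1, by have := Nat.one_le_two_pow (n := n - 1); omega⟩
  have h2 : 2 ^ n = 2 * 2 ^ (n - 1) := by
    conv_lhs => rw [show n = (n - 1) + 1 by omega]
    ring
  have h2t : 2 * β * J = 2 * (β * J) := by ring
  rw [h2t, tutte_grigStar n hn]
  have e1 : 2 ^ n - 1 = 2 * k + 1 := by omega
  have e2 : 3 * 2 ^ (n - 1) - 2 = 3 * k + 1 := by omega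
  have e4 : 2 ^ n = 2 * k + 2 := by omega
  have ecast : (3 * (2 : ℝ) ^ (n - 1) - 2 : ℝ) = 3 * (k : ℝ) + 1 := by
    have hcst : ((2 : ℝ)) ^ (n - 1) = ((2 ^ (n - 1) : ℕ) : ℝ) := by push_cast; ring
    rw [hcst, hk]
    push_cast
    ring
  have e3 : 2 ^ (n - 1) - 1 = k := by omega
  rw [e1, e2, e3, e4, hk, ecast]
  exact ising_algebra (β * J) h k
end
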